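/- arXiv:2212.04880 — 3 statements merged into one kernel-verified Lean document; each statement's English description precedes it below -/
import Mathlib

section
/- Let G be a connected chordal graph, S the label of a minimum-weight edge of C(G), and u, v two vertices of G not in S. Then S is a u-v separator in G if and only if every maximal clique containing u and every maximal clique containing v lie in different connected components of C(G)⊖S. -/
open SimpleGraph

attribute [local instance] Classical.propDecidable
set_option linter.unusedSectionVars false

variable {V : Type*} [Fintype V] [DecidableEq V]

/-- A graph is chordal if it has no induced cycle of length at least 4. -/
def IsChordal (G : SimpleGraph V) : Prop :=
  ∀ n : ℕ, 4 ≤ n →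
    ¬ ∃ f : Fin n ↪ V, ∀ i j, (cycleGraph n).Adj i j ↔ G.Adj (f i) (f j)

/-- `K` is a maximal clique of `G`. -/
def MaxClique (G : SimpleGraph V) (K : Finset V) : Prop :=
  G.IsClique (K : Set V) ∧ ∀ K' : Finset V, G.IsClique (K' : Set V) → K ⊆ K' → K = K'

/-- The type of maximal cliques of `G`. -/
abbrev CV (G : SimpleGraph V) := {K : Finset V // MaxClique G K}

/-- `S` is a `u`-`v` separator of `G`: `u, v ∉ S` and every `u`-`v` walk meets `S`. -/
def Separates (G : SimpleGraph V) (S : Finset V) (u v : V) : Prop :=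
  u ∉ S ∧ v ∉ S ∧ ∀ p : G.Walk u v, ∃ x ∈ p.support, x ∈ S

lemma Separates.symm' {G : SimpleGraph V} {S : Finset V} {u v : V}
    (h : Separates G S u v) : Separates G S v u := by
  obtain ⟨hu, hv, h⟩ := h
  refine ⟨hv, hu, fun p => ?_⟩
  obtain ⟨x, hx, hxS⟩ := h p.reverse
  refine ⟨x, ?_, hxS⟩
  simpa using hx

/-- `S` is a minimal `u`-`v` separator of `G`. -/
def MinSeparates (G : SimpleGraph V) (S : Finset V) (u v : V) : Prop :=
  Separates G S u v ∧ ∀ S' : Finset V, S' ⊂ S → ¬ Separates G S' u v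

lemma MinSeparates.symm' {G : SimpleGraph V} {S : Finset V} {u v : V}
    (h : MinSeparates G S u v) : MinSeparates G S v u :=
  ⟨h.1.symm', fun S' hS' hc => h.2 S' hS' hc.symm'⟩

/-- The clique graph `C(G)` of `G`: vertices are the maximal cliques; `K` and `K'` are
adjacent iff `K ∩ K'` is a minimal `u`-`v` separator for all `u ∈ K \ K'`, `v ∈ K' \ K`. -/
def cliqueGraph (G : SimpleGraph V) : SimpleGraph (CV G) where
  Adj K K' := K ≠ K' ∧
    ∀ u ∈ K.1 \ K'.1, ∀ v ∈ K'.1 \ K.1, MinSeparates G (K.1 ∩ K'.1) u v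
  symm := by
    constructor
    rintro K K' ⟨hne, h⟩
    refine ⟨hne.symm, fun u hu v hv => ?_⟩
    rw [Finset.inter_comm]
    exact (h v hv u hu).symm'
  loopless := by constructor; rintro K ⟨hne, -⟩; exact hne rfl

/-- A clique tree of `G`: a tree on the maximal cliques of `G` such that for every vertex
`v`, the maximal cliques containing `v` induce a connected subgraph (a subtree). -/
def IsCliqueTree (G : SimpleGraph V) (T : SimpleGraph (CV G)) : Prop :=
  T.IsTree ∧ ∀ v : V, (T.induce {K : CV G | v ∈ K.1}).Connected

/-- `C(G) ⊖ S`: the clique graph with all edges labeled `S` deleted. -/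
def deleteLabel (G : SimpleGraph V) (S : Finset V) : SimpleGraph (CV G) where
  Adj K K' := (cliqueGraph G).Adj K K' ∧ K.1 ∩ K'.1 ≠ S
  symm := by
    constructor
    rintro K K' ⟨h, hS⟩
    exact ⟨h.symm, by rwa [Finset.inter_comm]⟩
  loopless := by constructor; rintro K ⟨h, -⟩; exact (cliqueGraph G).loopless.irrefl K h

/-- `w` is the minimum edge weight of `C(G)` (weights are `|K ∩ K'|`). -/
def IsMinEdgeWeight (G : SimpleGraph V) (w : ℕ) : Prop :=
  (∃ K K' : CV G, (cliqueGraph G).Adj K K' ∧ (K.1 ∩ K'.1).card = w) ∧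
    ∀ K K' : CV G, (cliqueGraph G).Adj K K' → w ≤ (K.1 ∩ K'.1).card

/-- `C(G)` with all edges of (minimum) weight `w` deleted; its connected components are
the units. -/
def unitGraph (G : SimpleGraph V) (w : ℕ) : SimpleGraph (CV G) where
  Adj K K' := (cliqueGraph G).Adj K K' ∧ (K.1 ∩ K'.1).card ≠ w
  symm := by
    constructor
    rintro K K' ⟨h, hw⟩
    exact ⟨h.symm, by rwa [Finset.inter_comm]⟩
  loopless := by constructor; rintro K ⟨h, -⟩; exact (cliqueGraph G).loopless.irrefl K h

/-- The type of units. -/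
abbrev LUnit (G : SimpleGraph V) (w : ℕ) := (unitGraph G w).ConnectedComponent

/-- The unit containing a maximal clique `K`. -/
def umk (G : SimpleGraph V) (w : ℕ) (K : CV G) : LUnit G w :=
  (unitGraph G w).connectedComponentMk K

/-- The layer structure: units are its vertices; two units are adjacent iff some
edge of `C(G)` crosses them. -/
def layerGraph (G : SimpleGraph V) (w : ℕ) : SimpleGraph (LUnit G w) where
  Adj U U' := U ≠ U' ∧ ∃ K K' : CV G,
    (cliqueGraph G).Adj K K' ∧ umk G w K = U ∧ umk G w K' = U'
  symm := by
    constructor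
    rintro U U' ⟨hne, K, K', hadj, hK, hK'⟩
    exact ⟨hne.symm, K', K, hadj.symm, hK', hK⟩
  loopless := by constructor; rintro U ⟨hne, -⟩; exact hne rfl

/-- All edges of `C(G)` crossing `U` and `U'` have the label `S`. -/
def CrossLabel (G : SimpleGraph V) (w : ℕ) (U U' : LUnit G w) (S : Finset V) : Prop :=
  ∀ K K' : CV G, (cliqueGraph G).Adj K K' → umk G w K = U → umk G w K' = U' →
    K.1 ∩ K'.1 = S

/-- `𝒱(U)`: the vertices of `G` contained in some maximal clique of the unit `U`. -/
def unitVerts (G : SimpleGraph V) (w : ℕ) (U : LUnit G w) : Set V :=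
  {x | ∃ K : CV G, umk G w K = U ∧ x ∈ K.1}

/-- An MCS ordering of `G`: at each step, the visited vertex has the maximum number of
already visited neighbors among unvisited vertices. -/
def IsMCSOrdering (G : SimpleGraph V) (σ : Fin (Fintype.card V) ≃ V) : Prop :=
  ∀ i j : Fin (Fintype.card V), i ≤ j →
    (Finset.univ.filter fun l => l < i ∧ G.Adj (σ l) (σ j)).card ≤
      (Finset.univ.filter fun l => l < i ∧ G.Adj (σ l) (σ i)).card

/-- A Prim ordering of `C(G)`: each vertex after the first is incident to an edge of
maximum weight among all edges between visited and unvisited vertices. -/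
def IsPrimOrdering (G : SimpleGraph V) (π : Fin (Fintype.card (CV G)) ≃ CV G) : Prop :=
  ∀ i : Fin (Fintype.card (CV G)), 0 < (i : ℕ) →
    ∃ j, j < i ∧ (cliqueGraph G).Adj (π j) (π i) ∧
      ∀ j' k, j' < i → i ≤ k → (cliqueGraph G).Adj (π j') (π k) →
        ((π j').1 ∩ (π k).1).card ≤ ((π j).1 ∩ (π i).1).card

/-- The position in `π` of the first maximal clique containing `x`. -/
noncomputable def firstIdx (G : SimpleGraph V)
    (π : Fin (Fintype.card (CV G)) ≃ CV G) (x : V) : ℕ :=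
  sInf {j : ℕ | ∃ h : j < Fintype.card (CV G), x ∈ (π ⟨j, h⟩).1}

/-- `σ` is a generation of `π`. -/
def IsGeneration (G : SimpleGraph V) (π : Fin (Fintype.card (CV G)) ≃ CV G)
    (σ : Fin (Fintype.card V) ≃ V) : Prop :=
  ∀ x y : V, firstIdx G π x < firstIdx G π y → σ.symm x < σ.symm y

/-- `σ` is a linear extension of the relation `R`. -/
def ExtendsR (R : V → V → Prop) (σ : Fin (Fintype.card V) ≃ V) : Prop :=
  ∀ x y : V, R x y → x ≠ y → σ.symm x < σ.symm y

/-- `π` respects `R`. -/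
def RespectsR (G : SimpleGraph V) (R : V → V → Prop)
    (π : Fin (Fintype.card (CV G)) ≃ CV G) : Prop :=
  ∀ x y : V, R x y → x ≠ y → firstIdx G π x ≤ firstIdx G π y

/-- The set of vertices of `G` contained in one of the first `i` cliques of `π`. -/
def primPrefixVerts (G : SimpleGraph V) (π : Fin (Fintype.card (CV G)) ≃ CV G)
    (i : ℕ) : Set V :=
  {x | ∃ j : Fin (Fintype.card (CV G)), (j : ℕ) < i ∧ x ∈ (π j).1}

set_option maxHeartbeats 1600000

namespace CGAux

variable (G : SimpleGraph V)

/-- The graph `G` restricted to vertices in `A` (on the same vertex type). -/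
def within (A : Finset V) : SimpleGraph V where
  Adj a b := G.Adj a b ∧ a ∈ A ∧ b ∈ A
  symm := by constructor; rintro a b ⟨h, ha, hb⟩; exact ⟨h.symm, hb, ha⟩
  loopless := by constructor; rintro a ⟨h, -, -⟩; exact G.loopless.irrefl a h

def reachIn (A : Finset V) (u v : V) : Prop := (within G A).Reachable u v

variable {G}

lemma within_le (A : Finset V) : within G A ≤ G := by
  rintro a b ⟨h, -, -⟩; exact h

lemma within_mono {A B : Finset V} (h : A ⊆ B) : within G A ≤ within G B := by
  rintro a b ⟨hab, ha, hb⟩; exact ⟨hab, h ha, h hb⟩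

lemma reachIn_mono {A B : Finset V} (h : A ⊆ B) {u v : V} (hr : reachIn G A u v) :
    reachIn G B u v := hr.mono (within_mono h)

lemma reachIn_refl (A : Finset V) (u : V) : reachIn G A u u := Reachable.refl u

lemma reachIn_symm {A : Finset V} {u v : V} (h : reachIn G A u v) : reachIn G A v u :=
  Reachable.symm h

lemma reachIn_trans {A : Finset V} {u v w : V} (h : reachIn G A u v)
    (h' : reachIn G A v w) : reachIn G A u w := Reachable.trans h h'

lemma reachIn_adj {A : Finset V} {u v : V} (h : G.Adj u v) (hu : u ∈ A) (hv : v ∈ A) :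
    reachIn G A u v := Adj.reachable ⟨h, hu, hv⟩

/-- every vertex on a walk in `within A` is the start or lies in `A`. -/
lemma walk_support_mem {A : Finset V} {u v : V} (p : (within G A).Walk u v) :
    ∀ z ∈ p.support, z = u ∨ z ∈ A := by
  induction p with
  | nil => intro z hz; simp at hz; exact Or.inl hz
  | cons h p ih =>
    intro z hz
    rw [SimpleGraph.Walk.support_cons] at hz
    rcases List.mem_cons.1 hz with h1 | h2
    · exact Or.inl h1
    · rcases ih z h2 with h3 | h3
      · subst h3; exact Or.inr h.2.2
      · exact Or.inr h3

lemma walk_support_reach {A : Finset V} {u v : V} (p : (within G A).Walk u v) :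
    ∀ z ∈ p.support, reachIn G A u z := by
  induction p with
  | nil => intro z hz; simp at hz; subst hz; exact reachIn_refl A z
  | cons h p ih =>
    intro z hz
    rw [SimpleGraph.Walk.support_cons] at hz
    rcases List.mem_cons.1 hz with h1 | h2
    · subst h1; exact reachIn_refl _ _
    · exact reachIn_trans (Adj.reachable h) (ih z h2)

/-- `K` is a clique (as a finset). -/
def cliqueF (G : SimpleGraph V) (K : Finset V) : Prop :=
  ∀ a ∈ K, ∀ b ∈ K, a ≠ b → G.Adj a b

/-- `K` is a maximal clique within the vertex set `W`. -/
def MCin (G : SimpleGraph V) (W K : Finset V) : Prop :=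
  K ⊆ W ∧ cliqueF G K ∧ ∀ y ∈ W, (∀ z ∈ K, z ≠ y → G.Adj y z) → y ∈ K

/-- `v` is simplicial within `W`. -/
def SimpIn (G : SimpleGraph V) (W : Finset V) (v : V) : Prop :=
  v ∈ W ∧ ∀ p ∈ W, ∀ q ∈ W, G.Adj v p → G.Adj v q → p ≠ q → G.Adj p q

/-- extension of cliques to maximal cliques within `W`. -/
lemma exists_MCin (W : Finset V) : ∀ K : Finset V, K ⊆ W → cliqueF G K →
    ∃ M : Finset V, MCin G W M ∧ K ⊆ M := by
  by_contra hcon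
  push_neg at hcon
  obtain ⟨K, hKW, hKcl, hK⟩ := hcon
  -- take a counterexample with minimal (W \ K).card
  have hex : ∃ n, ∃ K : Finset V, K ⊆ W ∧ cliqueF G K ∧
      (¬ ∃ M : Finset V, MCin G W M ∧ K ⊆ M) ∧ (W \ K).card = n :=
    ⟨(W \ K).card, K, hKW, hKcl, fun ⟨M, hM, hKM⟩ => hK M hM hKM, rfl⟩
  classical
  obtain ⟨K, hKW, hKcl, hK, hcard⟩ := Nat.find_spec hex
  by_cases hmax : ∀ y ∈ W, (∀ z ∈ K, z ≠ y → G.Adj y z) → y ∈ K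
  · exact hK ⟨K, ⟨hKW, hKcl, hmax⟩, subset_rfl⟩
  · push_neg at hmax
    obtain ⟨y, hyW, hyadj, hyK⟩ := hmax
    set K' := insert y K with hK'
    have hK'W : K' ⊆ W := Finset.insert_subset hyW hKW
    have hK'cl : cliqueF G K' := by
      intro a ha b hb hab
      rcases Finset.mem_insert.1 ha with ha' | ha'
      · rcases Finset.mem_insert.1 hb with hb' | hb'
        · exact absurd (ha'.trans hb'.symm) hab
        · subst ha'; exact hyadj b hb' (fun h => hab h.symm)
      · rcases Finset.mem_insert.1 hb with hb' | hb'
        · subst hb'; exact (hyadj a ha' hab).symm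
        · exact hKcl a ha' b hb' hab
    have hlt : (W \ K').card < (W \ K).card := by
      apply Finset.card_lt_card
      constructor
      · intro z hz
        rw [Finset.mem_sdiff] at hz ⊢
        exact ⟨hz.1, fun h => hz.2 (Finset.mem_insert_of_mem h)⟩
      · intro hsub
        have : y ∈ W \ K := Finset.mem_sdiff.2 ⟨hyW, hyK⟩
        have := hsub this
        rw [Finset.mem_sdiff] at this
        exact this.2 (Finset.mem_insert_self y K)
    rw [hcard] at hlt
    have hK'bad : ¬ ∃ M : Finset V, MCin G W M ∧ K' ⊆ M := by
      rintro ⟨M, hM, hKM⟩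
      exact hK ⟨M, hM, (Finset.subset_insert y K).trans hKM⟩
    exact Nat.find_min hex hlt ⟨K', hK'W, hK'cl, hK'bad, rfl⟩

/-- The shortcut lemma: a simplicial-like vertex `v` can be avoided. -/
lemma shortcut {A : Finset V} {v : V}
    (hsimp : ∀ p ∈ A, ∀ q ∈ A, G.Adj v p → G.Adj v q → p ≠ q → G.Adj p q) :
    ∀ {u w : V}, u ≠ v → w ≠ v → reachIn G A u w → reachIn G (A.erase v) u w := by
  suffices h : ∀ n, ∀ u w : V, u ≠ v → w ≠ v → ∀ p : (within G A).Walk u w,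
      p.length ≤ n → reachIn G (A.erase v) u w by
    intro u w hu hw ⟨p⟩
    exact h p.length u w hu hw p le_rfl
  intro n
  induction n with
  | zero =>
    intro u w hu hw p hlen
    cases p with
    | nil => exact reachIn_refl _ _
    | cons h p => simp [SimpleGraph.Walk.length_cons] at hlen
  | succ n ih =>
    intro u w hu hw p hlen
    cases p with
    | nil => exact reachIn_refl _ _
    | @cons _ z _ h p =>
      rw [SimpleGraph.Walk.length_cons] at hlen
      by_cases hz : z = v
      · subst hz
        -- note: the simplicial vertex is now called `z`
        cases p with
        | nil => exact absurd rfl hw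
        | @cons _ z2 _ h2 p2 =>
          have hz2 : z2 ≠ z := fun he => (within G A).loopless.irrefl z (he ▸ h2)
          rw [SimpleGraph.Walk.length_cons] at hlen
          by_cases huz2 : u = z2
          · subst huz2
            exact ih u w hu hw p2 (by omega)
          · exact ih u w hu hw
              (SimpleGraph.Walk.cons ⟨hsimp u h.2.1 z2 h2.2.2 h.1.symm h2.1 huz2, h.2.1, h2.2.2⟩ p2)
              (by show p2.length + 1 ≤ n; omega)
      · have hr : reachIn G (A.erase v) z w := ih z w hz hw p (by omega)
        exact reachIn_trans
          (reachIn_adj h.1 (Finset.mem_erase.2 ⟨hu, h.2.1⟩) (Finset.mem_erase.2 ⟨hz, h.2.2⟩)) hr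


lemma getElem_cons_pos {α : Type*} (x : α) (l : List α) (i : ℕ) (h : i < (x :: l).length)
    (hpos : 0 < i) : (x :: l)[i]'h = l[i-1]'(by simp at h; omega) := by
  rcases Nat.exists_eq_add_of_lt hpos with ⟨t, rfl⟩
  simp only [Nat.zero_add] at *
  rw [List.getElem_cons_succ]
  simp

lemma getElem_idx_congr {α : Type*} (l : List α) {i j : ℕ} (h : i = j) (hi : i < l.length) :
    l[i]'hi = l[j]'(h ▸ hi) := by subst h; rfl

lemma cycle_adj_nat {n : ℕ} (hn : 4 ≤ n) (i j : Fin n) (hij : (i : ℕ) < j) :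
    (cycleGraph n).Adj i j ↔ ((j : ℕ) = (i : ℕ) + 1 ∨ ((i : ℕ) = 0 ∧ (j : ℕ) = n - 1)) := by
  have hi := i.isLt
  have hj := j.isLt
  rw [SimpleGraph.cycleGraph_adj', Fin.sub_def, Fin.sub_def]
  simp only [Fin.val_mk]
  have e1 : (n - ↑j + ↑i) % n = n - ↑j + ↑i := Nat.mod_eq_of_lt (by omega)
  have e2 : (n - ↑i + ↑j) % n = (j : ℕ) - (i : ℕ) := by
    have h : n - ↑i + ↑j = ((j : ℕ) - (i : ℕ)) + n := by omega
    rw [h, Nat.add_mod_right, Nat.mod_eq_of_lt (by omega)]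
  rw [e1, e2]
  omega

lemma chordal_no_cycle (hch : IsChordal G) (c : List V) (h4 : 4 ≤ c.length)
    (hnd : c.Nodup)
    (hadj : ∀ i j (hi : i < c.length) (hj : j < c.length), i < j →
      (G.Adj (c.get ⟨i, hi⟩) (c.get ⟨j, hj⟩) ↔ (j = i + 1 ∨ (i = 0 ∧ j = c.length - 1)))) :
    False := by
  apply hch c.length h4
  refine ⟨⟨fun i => c.get i, ?_⟩, ?_⟩
  · exact List.nodup_iff_injective_get.1 hnd
  · have key : ∀ i j : Fin c.length, (i : ℕ) < (j : ℕ) →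
        ((cycleGraph c.length).Adj i j ↔ G.Adj (c.get i) (c.get j)) := by
      intro i j hij
      rw [cycle_adj_nat h4 i j hij]
      exact (hadj i j i.isLt j.isLt hij).symm
    intro i j
    rcases lt_trichotomy (i : ℕ) (j : ℕ) with h | h | h
    · exact key i j h
    · have : i = j := Fin.ext h
      subst this
      simp only [Function.Embedding.coeFn_mk]
      constructor
      · intro hadj'; exact ((cycleGraph c.length).loopless.irrefl i hadj').elim
      · intro hadj'; exact (G.loopless.irrefl _ hadj').elim
    · rw [(cycleGraph c.length).adj_comm, G.adj_comm]
      exact key j i h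

variable (G)

/-- An `a`–`b` "path skeleton" with interior in `A`. -/
def CycP (A : Finset V) (a b : V) (M : List V) : Prop :=
  2 ≤ M.length ∧
  (∀ h : 0 < M.length, M[0]'h = a) ∧
  (∀ h : 2 ≤ M.length, M[M.length - 1]'(by omega) = b) ∧
  (∀ i (h : i < M.length), 0 < i → i < M.length - 1 → M[i]'h ∈ A) ∧
  (∀ i (h : i + 1 < M.length), G.Adj (M[i]'(by omega)) (M[i+1]'h))

variable {G}

lemma CycP_cons {A : Finset V} {a b c : V} {M : List V} (h : CycP G A c b M)
    (hadj : G.Adj a c) (hc : c ∈ A) : CycP G A a b (a :: M) := by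
  obtain ⟨h2, h0, hl, hmem, hadj'⟩ := h
  refine ⟨by simp; omega, ?_, ?_, ?_, ?_⟩
  · intro h; simp
  · intro h
    rw [getElem_cons_pos a M _ _ (by simp; omega),
      getElem_idx_congr M (show (a :: M).length - 1 - 1 = M.length - 1 by simp)]
    exact hl h2
  · intro i hi h1 h2'
    simp only [List.length_cons] at hi h2'
    rw [getElem_cons_pos a M i _ h1]
    rcases Nat.eq_zero_or_pos (i - 1) with h0' | hpos'
    · rw [getElem_idx_congr M h0', h0 (by omega)]
      exact hc
    · exact hmem (i-1) (by omega) hpos' (by omega)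
  · intro i hi
    simp only [List.length_cons] at hi
    rcases Nat.eq_zero_or_pos i with rfl | hipos
    · rw [List.getElem_cons_zero, List.getElem_cons_succ, h0 (by omega)]
      exact hadj
    · rw [getElem_cons_pos a M i _ hipos, getElem_cons_pos a M (i+1) _ (by omega),
        getElem_idx_congr M (show i + 1 - 1 = (i - 1) + 1 by omega)]
      exact hadj' (i-1) (by omega)

lemma walk_CycP {A : Finset V} {b : V} :
    ∀ {z z' : V}, (p : (within G A).Walk z z') → z ∈ A → G.Adj z' b →
      ∃ M, CycP G A z b M := by
  intro z z' p
  induction p with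
  | @nil u =>
    intro hz hzb
    refine ⟨[u, b], ?_, ?_, ?_, ?_, ?_⟩
    · simp
    · intro h; simp
    · intro h; simp
    · intro i hi h1 h2; simp at hi h2; omega
    · intro i hi
      simp at hi
      have : i = 0 := by omega
      subst this
      simpa using hzb
  | @cons u v w h p ih =>
    intro hu hwb
    obtain ⟨M, hM⟩ := ih h.2.2 hwb
    exact ⟨u :: M, CycP_cons hM h.1 h.2.2⟩

lemma CycP_exists {A : Finset V} {a b z z' : V} (hz : z ∈ A)
    (haz : G.Adj a z) (hz'b : G.Adj z' b) (hr : reachIn G A z z') :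
    ∃ M, CycP G A a b M := by
  obtain ⟨p⟩ := hr
  obtain ⟨M, hM⟩ := walk_CycP p hz hz'b
  exact ⟨a :: M, CycP_cons hM haz hz⟩


lemma CycP_cut {A : Finset V} {a b : V} {M : List V} (hM : CycP G A a b M)
    {i j : ℕ} (hij : i < j) (hjm : j < M.length)
    (hseam : G.Adj (M.get ⟨i, by omega⟩) (M.get ⟨j, hjm⟩)) :
    CycP G A a b (M.take (i+1) ++ M.drop j) := by
  obtain ⟨h2, h0, hl, hmem, hadj⟩ := hM
  have him : i < M.length := by omega
  have htk : (M.take (i+1)).length = i + 1 := by simp [List.length_take]; omega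
  have hlen : (M.take (i+1) ++ M.drop j).length = i + 1 + (M.length - j) := by
    simp [List.length_take, List.length_drop]; omega
  have hget1 : ∀ t (ht : t < i + 1) (ht' : t < (M.take (i+1) ++ M.drop j).length),
      (M.take (i+1) ++ M.drop j)[t]'ht' = M[t]'(by omega) := by
    intro t ht ht'
    rw [List.getElem_append_left (by omega : t < (M.take (i+1)).length), List.getElem_take]
  have hget2 : ∀ t (ht : i + 1 ≤ t) (ht' : t < (M.take (i+1) ++ M.drop j).length),
      (M.take (i+1) ++ M.drop j)[t]'ht' = M[j + (t - (i+1))]'(by omega) := by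
    intro t ht ht'
    rw [List.getElem_append_right (by omega : (M.take (i+1)).length ≤ t), List.getElem_drop,
      getElem_idx_congr M (show j + (t - (M.take (i+1)).length) = j + (t - (i+1)) by omega)]
  refine ⟨by omega, ?_, ?_, ?_, ?_⟩
  · intro h
    rw [hget1 0 (by omega) h, h0 (by omega)]
  · intro h
    rw [hget2 ((M.take (i+1) ++ M.drop j).length - 1) (by omega) (by omega),
      getElem_idx_congr M
        (show j + ((M.take (i+1) ++ M.drop j).length - 1 - (i+1)) = M.length - 1 by omega),
      hl h2]
  · intro t ht h1 h2'
    by_cases htc : t < i + 1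
    · rw [hget1 t htc ht]
      exact hmem t (by omega) h1 (by omega)
    · rw [hget2 t (by omega) ht]
      exact hmem _ (by omega) (by omega) (by omega)
  · intro t ht
    by_cases htc : t + 1 < i + 1
    · rw [hget1 t (by omega) (by omega), hget1 (t+1) htc ht]
      exact hadj t (by omega)
    · by_cases htc2 : t < i + 1
      · have hti : t = i := by omega
        subst hti
        rw [hget1 t (by omega) (by omega), hget2 (t+1) (by omega) ht,
          getElem_idx_congr M (show j + (t + 1 - (t+1)) = j by omega)]
        simpa using hseam
      · rw [hget2 t (by omega) (by omega), hget2 (t+1) (by omega) ht,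
          getElem_idx_congr M (show j + (t + 1 - (i+1)) = (j + (t - (i+1))) + 1 by omega)]
        exact hadj _ (by omega)

lemma CycP_drop {A : Finset V} {a b : V} {M : List V} (hM : CycP G A a b M)
    {j : ℕ} (hj : j < M.length - 1) (hja : M.get ⟨j, by omega⟩ = a) :
    CycP G A a b (M.drop j) := by
  obtain ⟨h2, h0, hl, hmem, hadj⟩ := hM
  set m := M.length with hm
  have hlen : (M.drop j).length = m - j := by simp [hm]
  have hget : ∀ t (ht : t < (M.drop j).length), (M.drop j)[t]'ht = M[j + t]'(by omega) := by
    intro t ht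
    rw [List.getElem_drop]
  refine ⟨by omega, ?_, ?_, ?_, ?_⟩
  · intro h
    rw [hget 0 h, getElem_idx_congr M (show j + 0 = j by omega)]
    simpa using hja
  · intro h
    rw [hget _ (by omega), getElem_idx_congr M (show j + ((M.drop j).length - 1) = m - 1 by omega),
      hl h2]
  · intro t ht h1 h2'
    rw [hget t ht]
    exact hmem _ (by omega) (by omega) (by omega)
  · intro t ht
    rw [hget t (by omega), hget (t+1) ht,
      getElem_idx_congr M (show j + (t+1) = (j + t) + 1 by omega)]
    exact hadj _ (by omega)

lemma CycP_mem {A : Finset V} {a b : V} {M : List V} (hM : CycP G A a b M) :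
    ∀ x ∈ M, x = a ∨ x = b ∨ x ∈ A := by
  obtain ⟨h2, h0, hl, hmem, hadj⟩ := hM
  intro x hx
  obtain ⟨i, hi, he⟩ := List.mem_iff_getElem.1 hx
  rcases Nat.eq_zero_or_pos i with rfl | hpos
  · left; rw [← he, h0 (by omega)]
  · by_cases hil : i = M.length - 1
    · right; left; rw [← he, getElem_idx_congr M hil, hl h2]
    · right; right; rw [← he]; exact hmem i hi hpos (by omega)

lemma CycP_min_facts {A : Finset V} {a b : V} (hab : ¬ G.Adj a b) (hane : a ≠ b)
    (hex : ∃ M, CycP G A a b M) :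
    ∃ M, CycP G A a b M ∧ 3 ≤ M.length ∧ M.Nodup ∧
      (∀ i j (hi : i < M.length) (hj : j < M.length), i < j →
        ¬(i = 0 ∧ j = M.length - 1) →
        (G.Adj (M.get ⟨i, hi⟩) (M.get ⟨j, hj⟩) ↔ j = i + 1)) := by
  classical
  obtain ⟨M0, hM0⟩ := hex
  have hexn : ∃ n, ∃ M, CycP G A a b M ∧ M.length = n := ⟨M0.length, M0, hM0, rfl⟩
  obtain ⟨M, hM, hMn⟩ := Nat.find_spec hexn
  have hmin : ∀ M' : List V, CycP G A a b M' → M.length ≤ M'.length := by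
    intro M' hM'
    by_contra hlt
    exact Nat.find_min hexn (by omega) ⟨M', hM', rfl⟩
  have h2 := hM.1
  have hm3 : 3 ≤ M.length := by
    by_contra h3
    have hlen2 : M.length = 2 := by omega
    have := hM.2.2.2.2 0 (by omega)
    simp only [Nat.zero_add] at this
    rw [hM.2.1 (by omega), getElem_idx_congr M (show 1 = M.length - 1 by omega),
      hM.2.2.1 h2] at this
    exact hab this
  set m := M.length with hm
  -- the "induced" property
  have hind : ∀ i j (hi : i < m) (hj : j < m), i < j → ¬(i = 0 ∧ j = m - 1) →
      (G.Adj (M.get ⟨i, hi⟩) (M.get ⟨j, hj⟩) ↔ j = i + 1) := by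
    intro i j hi hj hij hnot
    constructor
    · intro hadj
      by_contra hne
      have hj2 : i + 1 < j := by omega
      have hcut := CycP_cut hM hij hj hadj
      have := hmin _ hcut
      rw [List.length_append, List.length_take, List.length_drop] at this
      omega
    · intro he
      subst he
      have := hM.2.2.2.2 i hj
      simpa using this
  refine ⟨M, hM, hm3, ?_, hind⟩
  -- nodup
  rw [List.nodup_iff_injective_get]
  rintro ⟨i, hi⟩ ⟨j, hj⟩ he
  simp only [Fin.mk.injEq]
  by_contra hne
  -- wlog i < j
  have key : ∀ i j (hi : i < m) (hj : j < m), i < j → M.get ⟨i, hi⟩ = M.get ⟨j, hj⟩ → False := by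
    intro i j hi hj hij heq
    by_cases hi0 : i = 0
    · subst hi0
      by_cases hjl : j = m - 1
      · apply hane
        have heq' : M[0]'(by omega) = M[j]'hj := by simpa using heq
        calc a = M[0]'(by omega) := (hM.2.1 (by omega)).symm
        _ = M[j]'hj := heq'
        _ = M[M.length - 1]'(by omega) := getElem_idx_congr M hjl hj
        _ = b := hM.2.2.1 h2
      · have hdrop := CycP_drop hM (by omega : j < m - 1)
          (by rw [← heq]; simp only [List.get_eq_getElem]; exact hM.2.1 hi :
            M.get ⟨j, by omega⟩ = a)
        have := hmin _ hdrop
        rw [List.length_drop] at this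
        omega
    · -- i ≥ 1 : cut (i-1, j) with seam adj M[i-1] M[j] (since M[i] = M[j])
      have hseam : G.Adj (M.get ⟨i-1, by omega⟩) (M.get ⟨j, hj⟩) := by
        rw [← heq]
        have := hM.2.2.2.2 (i-1) (by omega)
        rw [getElem_idx_congr M (show (i-1) + 1 = i by omega)] at this
        simpa using this
      have hcut := CycP_cut hM (by omega : i - 1 < j) hj hseam
      have := hmin _ hcut
      rw [List.length_append, List.length_take, List.length_drop] at this
      omega
  rcases lt_trichotomy i j with h | h | h
  · exact key i j hi hj h he
  · exact hne h
  · exact key j i hj hi h he.symm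


lemma two_paths_cycle (hch : IsChordal G) (A₁ A₂ : Finset V) (a b : V)
    (hd : ∀ x ∈ A₁, x ∉ A₂)
    (ha2 : a ∉ A₂) (hb2 : b ∉ A₂)
    (hane : a ≠ b) (hnadj : ¬ G.Adj a b)
    (hcross : ∀ x ∈ A₁, ∀ y ∈ A₂, ¬ G.Adj x y)
    (hMex : ∃ M, CycP G A₁ a b M) (hNex : ∃ N, CycP G A₂ a b N) : False := by
  obtain ⟨M, hM, hm3, hMnd, hMind⟩ := CycP_min_facts hnadj hane hMex
  obtain ⟨N, hN, hn3, hNnd, hNind⟩ := CycP_min_facts hnadj hane hNex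
  simp only [List.get_eq_getElem] at hMind hNind
  have hMa : ∀ h, M[0]'h = a := hM.2.1
  have hMb : ∀ h, M[M.length - 1]'h = b := fun _ => hM.2.2.1 hM.1
  have hMint := hM.2.2.2.1
  have hNa : ∀ h, N[0]'h = a := hN.2.1
  have hNb : ∀ h, N[N.length - 1]'h = b := fun _ => hN.2.2.1 hN.1
  have hNint := hN.2.2.2.1
  have hqlen : ((N.drop 1).dropLast).reverse.length = N.length - 2 := by
    simp [List.length_dropLast, List.length_drop]
    omega
  have hq : ∀ s (hs : s < N.length - 2) (hs2 : s < ((N.drop 1).dropLast).reverse.length),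
      ((N.drop 1).dropLast).reverse[s]'hs2 = N[N.length - 2 - s]'(by omega) := by
    intro s hs hs2
    rw [List.getElem_reverse, List.getElem_dropLast, List.getElem_drop,
      getElem_idx_congr N (show 1 + (((N.drop 1).dropLast).length - 1 - s)
        = N.length - 2 - s by simp [List.length_dropLast, List.length_drop]; omega)]
  set cy := M ++ ((N.drop 1).dropLast).reverse with hcdef
  have hclen : cy.length = M.length + (N.length - 2) := by
    simp [hcdef, List.length_append, List.length_dropLast, List.length_drop]
    omega
  have hc1 : ∀ t (ht : t < M.length) (ht2 : t < cy.length), cy[t]'ht2 = M[t]'ht := by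
    intro t ht ht2
    exact List.getElem_append_left ht
  have hc2 : ∀ s (hs : s < N.length - 2) (hs2 : M.length + s < cy.length),
      cy[M.length + s]'hs2 = N[N.length - 2 - s]'(by omega) := by
    intro s hs hs2
    rw [List.getElem_append_right (by omega : M.length ≤ M.length + s),
      getElem_idx_congr _ (show M.length + s - M.length = s by omega), hq s hs]
  -- nodup
  have hqA : ∀ x ∈ ((N.drop 1).dropLast).reverse, x ∈ A₂ := by
    intro x hx
    obtain ⟨s, hs, rfl⟩ := List.mem_iff_getElem.1 hx
    rw [hq s (by omega : s < N.length - 2)]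
    exact hNint _ (by omega) (by omega) (by omega)
  have hnd : cy.Nodup := by
    rw [hcdef, List.nodup_append]
    refine ⟨hMnd, ?_, ?_⟩
    · rw [List.nodup_reverse]
      exact ((List.dropLast_sublist _).trans (List.drop_sublist 1 N)).nodup hNnd
    · intro x hxM y hxq hxy
      subst hxy
      have hx2 := hqA x hxq
      rcases CycP_mem hM x hxM with rfl | rfl | hx1
      · exact ha2 hx2
      · exact hb2 hx2
      · exact hd x hx1 hx2
  apply chordal_no_cycle hch cy (by omega) hnd
  simp only [List.get_eq_getElem]
  intro i j hi hj hij
  by_cases hjm : j < M.length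
  · -- both in M
    rw [hc1 i (by omega), hc1 j (by omega)]
    by_cases hend : i = 0 ∧ j = M.length - 1
    · obtain ⟨rfl, rfl⟩ := hend
      rw [hMa (by omega), hMb (by omega)]
      constructor
      · intro h; exact absurd h hnadj
      · intro h; exfalso; omega
    · rw [hMind i j (by omega) (by omega) hij hend]
      omega
  · by_cases him : i < M.length
    · -- i in M, j in q
      rw [hc1 i (by omega), getElem_idx_congr cy (show j = M.length + (j - M.length) by omega),
        hc2 (j - M.length) (by omega)]
      by_cases hi0 : i = 0
      · subst hi0
        have e : M[0]'(by omega) = N[0]'(by omega) := by rw [hMa, hNa]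
        rw [e, hNind 0 (N.length - 2 - (j - M.length)) (by omega) (by omega) (by omega)
          (by omega)]
        omega
      · by_cases hil : i = M.length - 1
        · subst hil
          have e : M[M.length - 1]'(by omega) = N[N.length - 1]'(by omega) := by
            rw [hMb, hNb]
          rw [e, G.adj_comm,
            hNind (N.length - 2 - (j - M.length)) (N.length - 1) (by omega) (by omega)
              (by omega) (by omega)]
          omega
        · constructor
          · intro h
            exact absurd h (hcross _ (hMint i (by omega) (by omega) (by omega))
              _ (hNint _ (by omega) (by omega) (by omega)))
          · intro h; exfalso; omega
    · -- both in q
      rw [getElem_idx_congr cy (show i = M.length + (i - M.length) by omega),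
        hc2 (i - M.length) (by omega),
        getElem_idx_congr cy (show j = M.length + (j - M.length) by omega),
        hc2 (j - M.length) (by omega), G.adj_comm,
        hNind (N.length - 2 - (j - M.length)) (N.length - 2 - (i - M.length))
          (by omega) (by omega) (by omega) (by omega)]
      omega


lemma reach_strengthen {A B : Finset V} : ∀ {u w : V}, (p : (within G A).Walk u w) →
    (∀ z ∈ p.support, z ∈ B) → reachIn G B u w := by
  intro u w p
  induction p with
  | nil => intro _; exact reachIn_refl _ _
  | @cons x y _ h p ih =>
    intro hmem
    refine reachIn_trans (reachIn_adj h.1 ?_ ?_) (ih ?_)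
    · exact hmem x (by simp)
    · exact hmem y (by simp [SimpleGraph.Walk.support_cons])
    · intro z hz
      exact hmem z (by simp [SimpleGraph.Walk.support_cons]; right; exact hz)

lemma exists_nbr_comp {W T : Finset V} {a b : V} (t : V) (htT : t ∈ T)
    (haA : a ∈ W \ T) (hbA : b ∈ W \ T)
    (hsep : ¬ reachIn G (W \ T) a b)
    (hreach : reachIn G (W \ (T.erase t)) a b) :
    ∃ z, G.Adj t z ∧ z ∈ W \ T ∧ reachIn G (W \ T) a z := by
  by_contra hno
  push_neg at hno
  have hbt : b ≠ t := fun he => (Finset.mem_sdiff.1 hbA).2 (he ▸ htT)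
  apply hsep
  have claim : ∀ u w : V, (p : (within G (W \ (T.erase t))).Walk u w) →
      reachIn G (W \ T) a u → u ∈ W \ T → w ≠ t → reachIn G (W \ T) a w := by
    intro u w p
    induction p with
    | nil => intro hu _ _; exact hu
    | @cons x y _ h p ih =>
      intro hu huA hwt
      by_cases hyt : y = t
      · subst hyt
        exact (hno x h.1.symm huA hu).elim
      · have hmem := Finset.mem_sdiff.1 h.2.2
        have hyA : y ∈ W \ T :=
          Finset.mem_sdiff.2 ⟨hmem.1, fun hyT => hmem.2 (Finset.mem_erase.2 ⟨hyt, hyT⟩)⟩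
        exact ih (reachIn_trans hu (reachIn_adj h.1 huA hyA)) hyA hwt
  obtain ⟨p⟩ := hreach
  exact claim a b p (reachIn_refl _ _) haA hbt

lemma sep_clique (hch : IsChordal G) {W T : Finset V} {a b : V}
    (ha : a ∈ W \ T) (hb : b ∈ W \ T)
    (hsep : ¬ reachIn G (W \ T) a b)
    (hmin : ∀ t ∈ T, reachIn G (W \ (T.erase t)) a b) :
    cliqueF G T := by
  intro s hs t ht hst
  by_contra hnadj
  classical
  set Cu := (W \ T).filter (fun z => reachIn G (W \ T) a z) with hCu
  set Cv := (W \ T).filter (fun z => reachIn G (W \ T) b z) with hCv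
  have hCuP : ∀ x, x ∈ Cu ↔ (x ∈ W \ T ∧ reachIn G (W \ T) a x) := by
    intro x; rw [hCu, Finset.mem_filter]
  have hCvP : ∀ x, x ∈ Cv ↔ (x ∈ W \ T ∧ reachIn G (W \ T) b x) := by
    intro x; rw [hCv, Finset.mem_filter]
  have hd : ∀ x ∈ Cu, x ∉ Cv := by
    intro x hx hx'
    exact hsep (reachIn_trans ((hCuP x).1 hx).2 (reachIn_symm ((hCvP x).1 hx').2))
  have hcross : ∀ x ∈ Cu, ∀ y ∈ Cv, ¬ G.Adj x y := by
    intro x hx y hy hadj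
    obtain ⟨hxA, hxr⟩ := (hCuP x).1 hx
    obtain ⟨hyA, hyr⟩ := (hCvP y).1 hy
    exact hsep (reachIn_trans (reachIn_trans hxr (reachIn_adj hadj hxA hyA))
      (reachIn_symm hyr))
  have hs2 : s ∉ Cv := fun h => (Finset.mem_sdiff.1 ((hCvP s).1 h).1).2 hs
  have ht2 : t ∉ Cv := fun h => (Finset.mem_sdiff.1 ((hCvP t).1 h).1).2 ht
  -- a path skeleton through Cu:
  have mkP : ∀ (x : V) (hx : x ∈ W \ T) (hxr : reachIn G (W \ T) x a),
      ∀ c ∈ ({s, t} : Finset V), ∀ d ∈ ({s, t} : Finset V), c ≠ d →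
      True := fun _ _ _ _ _ _ _ _ => trivial
  have hMex : ∃ M, CycP G Cu s t M := by
    obtain ⟨zs, hzs_adj, hzsA, hzs_r⟩ := exists_nbr_comp s hs ha hb hsep (hmin s hs)
    obtain ⟨zt, hzt_adj, hztA, hzt_r⟩ := exists_nbr_comp t ht ha hb hsep (hmin t ht)
    have hzsC : zs ∈ Cu := (hCuP zs).2 ⟨hzsA, hzs_r⟩
    have hztC : zt ∈ Cu := (hCuP zt).2 ⟨hztA, hzt_r⟩
    have hr : reachIn G Cu zs zt := by
      obtain ⟨p⟩ := reachIn_trans (reachIn_symm hzs_r) hzt_r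
      refine reach_strengthen p ?_
      intro z hz
      rcases walk_support_mem p z hz with rfl | hzA
      · exact hzsC
      · exact (hCuP z).2 ⟨hzA, reachIn_trans hzs_r (walk_support_reach p z hz)⟩
    exact CycP_exists hzsC hzs_adj hzt_adj.symm hr
  have hNex : ∃ N, CycP G Cv s t N := by
    have hsep' : ¬ reachIn G (W \ T) b a := fun h => hsep (reachIn_symm h)
    obtain ⟨zs, hzs_adj, hzsA, hzs_r⟩ := exists_nbr_comp s hs hb ha hsep'
      (reachIn_symm (hmin s hs))
    obtain ⟨zt, hzt_adj, hztA, hzt_r⟩ := exists_nbr_comp t ht hb ha hsep'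
      (reachIn_symm (hmin t ht))
    have hzsC : zs ∈ Cv := (hCvP zs).2 ⟨hzsA, hzs_r⟩
    have hztC : zt ∈ Cv := (hCvP zt).2 ⟨hztA, hzt_r⟩
    have hr : reachIn G Cv zs zt := by
      obtain ⟨p⟩ := reachIn_trans (reachIn_symm hzs_r) hzt_r
      refine reach_strengthen p ?_
      intro z hz
      rcases walk_support_mem p z hz with rfl | hzA
      · exact hzsC
      · exact (hCvP z).2 ⟨hzA, reachIn_trans hzs_r (walk_support_reach p z hz)⟩
    exact CycP_exists hzsC hzs_adj hzt_adj.symm hr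
  exact two_paths_cycle hch Cu Cv s t hd hs2 ht2 hst hnadj hcross hMex hNex


lemma one_side (hch : IsChordal G) {W T : Finset V} {a b : V}
    (hTW : T ⊆ W) (ha' : a ∈ W \ T) (hb' : b ∈ W \ T)
    (hsep : ¬ reachIn G (W \ T) a b)
    (hmin' : ∀ t ∈ T, reachIn G (W \ (T.erase t)) a b)
    (ihyp : ∀ W' : Finset V, W' ⊂ W → ∀ a' ∈ W', ∀ b' ∈ W', a' ≠ b' → ¬G.Adj a' b' →
      ∃ s₁ ∈ W', ∃ s₂ ∈ W', s₁ ≠ s₂ ∧ ¬G.Adj s₁ s₂ ∧ SimpIn G W' s₁ ∧ SimpIn G W' s₂) :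
    ∃ z, z ∈ W \ T ∧ reachIn G (W \ T) a z ∧ SimpIn G W z := by
  classical
  have hTclique : cliqueF G T := sep_clique hch ha' hb' hsep hmin'
  set Cu := (W \ T).filter (fun z => reachIn G (W \ T) a z) with hCu
  have hCuP : ∀ x, x ∈ Cu ↔ (x ∈ W \ T ∧ reachIn G (W \ T) a x) := by
    intro x; rw [hCu, Finset.mem_filter]
  have haCu : a ∈ Cu := (hCuP a).2 ⟨ha', reachIn_refl _ _⟩
  set W₁ := Cu ∪ T with hW₁
  have hW₁W : W₁ ⊆ W := by
    intro x hx
    rcases Finset.mem_union.1 hx with h | h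
    · exact (Finset.mem_sdiff.1 ((hCuP x).1 h).1).1
    · exact hTW h
  have hbW₁ : b ∉ W₁ := by
    intro hbw
    rcases Finset.mem_union.1 hbw with h | h
    · exact hsep ((hCuP b).1 h).2
    · exact (Finset.mem_sdiff.1 hb').2 h
  have hW₁ss : W₁ ⊂ W := ⟨hW₁W, fun hsub => hbW₁ (hsub (Finset.mem_sdiff.1 hb').1)⟩
  have hconf : ∀ z ∈ Cu, ∀ y ∈ W, G.Adj z y → y ∈ W₁ := by
    intro z hz y hy hadj
    by_cases hyT : y ∈ T
    · exact Finset.mem_union_right _ hyT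
    · refine Finset.mem_union_left _ ((hCuP y).2 ⟨Finset.mem_sdiff.2 ⟨hy, hyT⟩, ?_⟩)
      exact reachIn_trans ((hCuP z).1 hz).2
        (reachIn_adj hadj ((hCuP z).1 hz).1 (Finset.mem_sdiff.2 ⟨hy, hyT⟩))
  have htrans : ∀ z ∈ Cu, SimpIn G W₁ z → SimpIn G W z := by
    intro z hz hsimp
    refine ⟨hW₁W hsimp.1, ?_⟩
    intro p hp q hq hzp hzq hpq
    exact hsimp.2 p (hconf z hz p hp hzp) q (hconf z hz q hq hzq) hzp hzq hpq
  by_cases hcomp : ∀ x ∈ W₁, ∀ y ∈ W₁, x ≠ y → G.Adj x y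
  · refine ⟨a, ha', reachIn_refl _ _, htrans a haCu ?_⟩
    exact ⟨Finset.mem_union_left _ haCu, fun p hp q hq _ _ hpq => hcomp p hp q hq hpq⟩
  · push_neg at hcomp
    obtain ⟨x, hx, y, hy, hxy, hnadjxy⟩ := hcomp
    obtain ⟨s₁, hs₁, s₂, hs₂, hne, hnadj12, hsim₁, hsim₂⟩ :=
      ihyp W₁ hW₁ss x hx y hy hxy hnadjxy
    have hnotboth : ¬(s₁ ∈ T ∧ s₂ ∈ T) := by
      rintro ⟨h1, h2⟩
      exact hnadj12 (hTclique s₁ h1 s₂ h2 hne)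
    rcases Finset.mem_union.1 hs₁ with hc1 | ht1
    · exact ⟨s₁, ((hCuP s₁).1 hc1).1, ((hCuP s₁).1 hc1).2, htrans s₁ hc1 hsim₁⟩
    · rcases Finset.mem_union.1 hs₂ with hc2 | ht2
      · exact ⟨s₂, ((hCuP s₂).1 hc2).1, ((hCuP s₂).1 hc2).2, htrans s₂ hc2 hsim₂⟩
      · exact (hnotboth ⟨ht1, ht2⟩).elim

lemma dirac_pairs (hch : IsChordal G) : ∀ (W : Finset V), ∀ a ∈ W, ∀ b ∈ W,
    a ≠ b → ¬G.Adj a b →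
    ∃ s₁ ∈ W, ∃ s₂ ∈ W, s₁ ≠ s₂ ∧ ¬G.Adj s₁ s₂ ∧ SimpIn G W s₁ ∧ SimpIn G W s₂ := by
  classical
  intro W
  induction W using Finset.strongInduction with
  | _ W ih =>
    intro a haW b hbW hab hnadj
    set T₀ := (W.erase a).erase b with hT₀
    have hT₀sep : ¬ reachIn G (W \ T₀) a b := by
      intro hr
      obtain ⟨p⟩ := hr
      cases p with
      | nil => exact hab rfl
      | @cons _ z _ h p =>
        have hz := h.2.2
        rw [Finset.mem_sdiff, hT₀, Finset.mem_erase, Finset.mem_erase] at hz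
        by_cases hza : z = a
        · exact G.loopless.irrefl a (hza ▸ h.1)
        · by_cases hzb : z = b
          · exact hnadj (hzb ▸ h.1)
          · exact hz.2 ⟨hzb, hza, hz.1⟩
    have hcand : T₀ ∈ (T₀.powerset.filter (fun T => ¬ reachIn G (W \ T) a b)) := by
      rw [Finset.mem_filter, Finset.mem_powerset]
      exact ⟨subset_rfl, hT₀sep⟩
    obtain ⟨T, hTmem, hTmin⟩ := Finset.exists_min_image _ Finset.card ⟨T₀, hcand⟩
    rw [Finset.mem_filter, Finset.mem_powerset] at hTmem
    obtain ⟨hTsub, hTsep⟩ := hTmem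
    have hTW : T ⊆ W := hTsub.trans ((Finset.erase_subset _ _).trans (Finset.erase_subset _ _))
    have haT : a ∉ T := fun h => by
      have := hTsub h
      rw [hT₀, Finset.mem_erase, Finset.mem_erase] at this
      exact this.2.1 rfl
    have hbT : b ∉ T := fun h => by
      have := hTsub h
      rw [hT₀, Finset.mem_erase] at this
      exact this.1 rfl
    have ha' : a ∈ W \ T := Finset.mem_sdiff.2 ⟨haW, haT⟩
    have hb' : b ∈ W \ T := Finset.mem_sdiff.2 ⟨hbW, hbT⟩
    have hmin' : ∀ t ∈ T, reachIn G (W \ (T.erase t)) a b := by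
      intro t ht
      by_contra hsep'
      have : T.erase t ∈ (T₀.powerset.filter (fun T => ¬ reachIn G (W \ T) a b)) := by
        rw [Finset.mem_filter, Finset.mem_powerset]
        exact ⟨(Finset.erase_subset _ _).trans hTsub, hsep'⟩
      have hle := hTmin _ this
      rw [Finset.card_erase_of_mem ht] at hle
      have : 0 < T.card := Finset.card_pos.2 ⟨t, ht⟩
      omega
    have hsepb : ¬ reachIn G (W \ T) b a := fun h => hTsep (reachIn_symm h)
    have hminb : ∀ t ∈ T, reachIn G (W \ (T.erase t)) b a := fun t ht =>
      reachIn_symm (hmin' t ht)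
    obtain ⟨z₁, hz₁A, hz₁r, hz₁s⟩ := one_side hch hTW ha' hb' hTsep hmin' (fun W' h => ih W' h)
    obtain ⟨z₂, hz₂A, hz₂r, hz₂s⟩ := one_side hch hTW hb' ha' hsepb hminb (fun W' h => ih W' h)
    have hne : z₁ ≠ z₂ := by
      rintro rfl
      exact hTsep (reachIn_trans hz₁r (reachIn_symm hz₂r))
    have hnadj12 : ¬ G.Adj z₁ z₂ := by
      intro hadj
      exact hTsep (reachIn_trans hz₁r (reachIn_trans (reachIn_adj hadj hz₁A hz₂A)
        (reachIn_symm hz₂r)))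
    exact ⟨z₁, (Finset.mem_sdiff.1 hz₁A).1, z₂, (Finset.mem_sdiff.1 hz₂A).1, hne, hnadj12,
      hz₁s, hz₂s⟩

lemma exists_simp (hch : IsChordal G) (W : Finset V) (hne : W.Nonempty) :
    ∃ v, SimpIn G W v := by
  by_cases hcomp : ∀ x ∈ W, ∀ y ∈ W, x ≠ y → G.Adj x y
  · obtain ⟨v, hv⟩ := hne
    exact ⟨v, hv, fun p hp q hq _ _ hpq => hcomp p hp q hq hpq⟩
  · push_neg at hcomp
    obtain ⟨x, hx, y, hy, hxy, hnadj⟩ := hcomp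
    obtain ⟨s₁, hs₁, _, _, _, _, hsim₁, _⟩ := dirac_pairs hch W x hx y hy hxy hnadj
    exact ⟨s₁, hsim₁⟩


def edgeIn (G : SimpleGraph V) (W : Finset V) (x : V) (K K' : Finset V) : Prop :=
  MCin G W K ∧ MCin G W K' ∧ K ≠ K' ∧ x ∈ K ∧ x ∈ K' ∧
    ∀ u ∈ K, u ∉ K' → ∀ w ∈ K', w ∉ K → ¬ reachIn G (W \ (K ∩ K')) u w

lemma edgeIn_symm {W : Finset V} {x : V} {K K' : Finset V} (h : edgeIn G W x K K') :
    edgeIn G W x K' K := by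
  obtain ⟨h1, h2, h3, h4, h5, h6⟩ := h
  refine ⟨h2, h1, h3.symm, h5, h4, ?_⟩
  intro u hu hu' w hw hw' hr
  rw [Finset.inter_comm] at hr
  exact h6 w hw hw' u hu hu' (reachIn_symm hr)

noncomputable def nbrF (G : SimpleGraph V) (W : Finset V) (v : V) : Finset V :=
  W.filter (fun z => z ≠ v ∧ G.Adj v z)

section Transfer

variable {W : Finset V} {v : V} (hsimp : SimpIn G W v)

lemma nbrF_mem {z : V} : z ∈ nbrF G W v ↔ z ∈ W ∧ z ≠ v ∧ G.Adj v z := by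
  classical
  rw [nbrF, Finset.mem_filter]

include hsimp

lemma nbrF_clique : cliqueF G (nbrF G W v) := by
  intro p hp q hq hpq
  rw [nbrF_mem] at hp hq
  exact hsimp.2 p hp.1 q hq.1 hp.2.2 hq.2.2 hpq

lemma Kv_clique : cliqueF G (insert v (nbrF G W v)) := by
  intro p hp q hq hpq
  rcases Finset.mem_insert.1 hp with rfl | hp'
  · rcases Finset.mem_insert.1 hq with rfl | hq'
    · exact absurd rfl hpq
    · exact (nbrF_mem.1 hq').2.2
  · rcases Finset.mem_insert.1 hq with rfl | hq'
    · exact (nbrF_mem.1 hp').2.2.symm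
    · exact nbrF_clique hsimp p hp' q hq' hpq

lemma Kv_MC : MCin G W (insert v (nbrF G W v)) := by
  refine ⟨?_, Kv_clique hsimp, ?_⟩
  · intro z hz
    rcases Finset.mem_insert.1 hz with rfl | hz'
    · exact hsimp.1
    · exact (nbrF_mem.1 hz').1
  · intro y hy hadj
    by_contra hyK
    have hyv : y ≠ v := fun he => hyK (by rw [he]; exact Finset.mem_insert_self v _)
    have : G.Adj y v := hadj v (Finset.mem_insert_self v _) (fun he => hyv he.symm)
    exact hyK (Finset.mem_insert_of_mem (nbrF_mem.2 ⟨hy, hyv, this.symm⟩))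

lemma Kv_unique {K : Finset V} (hK : MCin G W K) (hvK : v ∈ K) :
    K = insert v (nbrF G W v) := by
  have hsub : K ⊆ insert v (nbrF G W v) := by
    intro z hz
    by_cases hzv : z = v
    · rw [hzv]; exact Finset.mem_insert_self v _
    · exact Finset.mem_insert_of_mem
        (nbrF_mem.2 ⟨hK.1 hz, hzv, hK.2.1 v hvK z hz (fun he => hzv he.symm)⟩)
  refine subset_antisymm hsub ?_
  intro y hy
  refine hK.2.2 y ((Kv_MC hsimp).1 hy) ?_
  intro z hz hzy
  exact Kv_clique hsimp y hy z (hsub hz) (fun he => hzy he.symm) |>.symm.symm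

lemma MC_erase {K : Finset V} (hK : MCin G W K) (hvK : v ∉ K) :
    MCin G (W.erase v) K := by
  refine ⟨?_, hK.2.1, ?_⟩
  · intro z hz
    exact Finset.mem_erase.2 ⟨fun he => hvK (he ▸ hz), hK.1 hz⟩
  · intro y hy hadj
    exact hK.2.2 y (Finset.mem_erase.1 hy).2 hadj

lemma MC_unerase {Q : Finset V} (hQ : MCin G (W.erase v) Q) (hz : ∃ z ∈ Q, ¬ G.Adj v z) :
    MCin G W Q := by
  refine ⟨fun z hz' => (Finset.mem_erase.1 (hQ.1 hz')).2, hQ.2.1, ?_⟩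
  intro y hy hadj
  by_cases hyv : y = v
  · exfalso
    obtain ⟨z, hzQ, hnadj⟩ := hz
    have hzv : z ≠ v := (Finset.mem_erase.1 (hQ.1 hzQ)).1
    have hyz : G.Adj y z := hadj z hzQ (fun he => hzv (he.trans hyv))
    rw [hyv] at hyz
    exact hnadj hyz
  · exact hQ.2.2 y (Finset.mem_erase.2 ⟨hyv, hy⟩) hadj

lemma Q_sub_nbrF {Q : Finset V} (hQ : MCin G (W.erase v) Q) (hsub : Q ⊆ nbrF G W v) :
    Q = nbrF G W v := by
  refine subset_antisymm hsub ?_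
  intro y hy
  refine hQ.2.2 y ?_ ?_
  · exact Finset.mem_erase.2 ⟨(nbrF_mem.1 hy).2.1, (nbrF_mem.1 hy).1⟩
  · intro z hz hzy
    exact nbrF_clique hsimp y hy z (hsub hz) (fun he => hzy he.symm)

lemma MC_not_sub_nbrF {K : Finset V} (hK : MCin G W K) (hvK : v ∉ K) :
    ¬ K ⊆ nbrF G W v := by
  intro hsub
  apply hvK
  refine hK.2.2 v hsimp.1 ?_
  intro z hz _
  exact (nbrF_mem.1 (hsub hz)).2.2

lemma reach_down {L : Finset V} {u w : V} (hu : u ≠ v) (hw : w ≠ v)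
    (hr : reachIn G (W \ L) u w) : reachIn G (W.erase v \ L) u w := by
  have heq : (W \ L).erase v = W.erase v \ L := by
    ext z
    simp only [Finset.mem_erase, Finset.mem_sdiff]
    tauto
  rw [← heq]
  refine shortcut ?_ hu hw hr
  intro p hp q hq hvp hvq hpq
  exact hsimp.2 p (Finset.mem_sdiff.1 hp).1 q (Finset.mem_sdiff.1 hq).1 hvp hvq hpq

lemma edge_up {x : V} {Q Q' : Finset V} (he : edgeIn G (W.erase v) x Q Q')
    (hQ : MCin G W Q) (hQ' : MCin G W Q') : edgeIn G W x Q Q' := by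
  obtain ⟨h1, h2, h3, h4, h5, h6⟩ := he
  refine ⟨hQ, hQ', h3, h4, h5, ?_⟩
  intro u hu hu' w hw hw' hr
  have huv : u ≠ v := (Finset.mem_erase.1 (h1.1 hu)).1
  have hwv : w ≠ v := (Finset.mem_erase.1 (h2.1 hw)).1
  exact h6 u hu hu' w hw hw' (reach_down hsimp huv hwv hr)

lemma edge_Kv {x : V} {Q : Finset V} (hx : x ∈ nbrF G W v)
    (he : edgeIn G (W.erase v) x (nbrF G W v) Q) :
    edgeIn G W x (insert v (nbrF G W v)) Q := by
  obtain ⟨h1, h2, h3, h4, h5, h6⟩ := he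
  have hvQ : v ∉ Q := fun h => (Finset.mem_erase.1 (h2.1 h)).1 rfl
  have hQW : MCin G W Q := by
    refine MC_unerase hsimp h2 ?_
    have hnsub : ¬ Q ⊆ nbrF G W v := fun hsub => h3.symm (Q_sub_nbrF hsimp h2 hsub)
    obtain ⟨z, hzQ, hznN⟩ := Finset.not_subset.1 hnsub
    refine ⟨z, hzQ, fun hadj => hznN (nbrF_mem.2 ⟨?_, ?_, hadj⟩)⟩
    · exact (Finset.mem_erase.1 (h2.1 hzQ)).2
    · exact (Finset.mem_erase.1 (h2.1 hzQ)).1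
  have hlabel : insert v (nbrF G W v) ∩ Q = nbrF G W v ∩ Q :=
    Finset.insert_inter_of_notMem hvQ
  refine ⟨Kv_MC hsimp, hQW, ?_, Finset.mem_insert_of_mem hx, h5, ?_⟩
  · intro hEq
    exact hvQ (hEq ▸ Finset.mem_insert_self v _)
  · intro u hu hu' w hw hw' hr
    rw [hlabel] at hr
    have hwv : w ≠ v := fun he' => hvQ (he' ▸ hw)
    have hwN : w ∉ nbrF G W v := fun h => hw' (Finset.mem_insert_of_mem h)
    rcases Finset.mem_insert.1 hu with rfl | huN
    · -- u = v
      obtain ⟨p⟩ := hr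
      cases p with
      | nil => exact hwv rfl
      | @cons _ s _ hadj p2 =>
        have hsW : s ∈ W := (Finset.mem_sdiff.1 hadj.2.2).1
        have hsv : s ≠ u := fun he' => (within G _).loopless.irrefl u (he' ▸ hadj)
        have hsN : s ∈ nbrF G W u := nbrF_mem.2 ⟨hsW, hsv, hadj.1⟩
        have hsQ : s ∉ Q := fun h =>
          (Finset.mem_sdiff.1 hadj.2.2).2 (Finset.mem_inter.2 ⟨hsN, h⟩)
        exact h6 s hsN hsQ w hw hwN (reach_down hsimp hsv hwv ⟨p2⟩)
    · exact h6 u huN hu' w hw hwN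
        (reach_down hsimp (fun he' => (nbrF_mem.1 huN).2.1 he') hwv hr)

lemma edge_KvL {x : V} {L : Finset V} (hL : MCin G (W.erase v) L)
    (hsub : nbrF G W v ⊆ L) (hne : L ≠ nbrF G W v) (hx : x ∈ nbrF G W v) :
    edgeIn G W x (insert v (nbrF G W v)) L := by
  have hvL : v ∉ L := fun h => (Finset.mem_erase.1 (hL.1 h)).1 rfl
  have hLW : MCin G W L := by
    refine MC_unerase hsimp hL ?_
    obtain ⟨z, hzL, hznN⟩ := Finset.not_subset.1 (fun hs => hne (subset_antisymm hs hsub))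
    refine ⟨z, hzL, fun hadj => hznN (nbrF_mem.2
      ⟨(Finset.mem_erase.1 (hL.1 hzL)).2, (Finset.mem_erase.1 (hL.1 hzL)).1, hadj⟩)⟩
  have hlabel : insert v (nbrF G W v) ∩ L = nbrF G W v := by
    rw [Finset.insert_inter_of_notMem hvL, Finset.inter_eq_left.2 hsub]
  refine ⟨Kv_MC hsimp, hLW, ?_, Finset.mem_insert_of_mem hx, hsub hx, ?_⟩
  · intro hEq
    exact hvL (hEq ▸ Finset.mem_insert_self v _)
  · intro u hu hu' w hw hw' hr
    rw [hlabel] at hr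
    have huv : u = v := by
      rcases Finset.mem_insert.1 hu with h | h
      · exact h
      · exact absurd (hsub h) hu'
    subst huv
    have hwv : w ≠ u := fun he' => hvL (he' ▸ hw)
    obtain ⟨p⟩ := hr
    cases p with
    | nil => exact hwv rfl
    | @cons _ s _ hadj p2 =>
      have hsv : s ≠ u := fun he' => (within G _).loopless.irrefl u (he' ▸ hadj)
      exact (Finset.mem_sdiff.1 hadj.2.2).2
        (nbrF_mem.2 ⟨(Finset.mem_sdiff.1 hadj.2.2).1, hsv, hadj.1⟩)

end Transfer


lemma rtg_rev {α : Type*} {r : α → α → Prop} (hsym : ∀ a b, r a b → r b a) {a b : α}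
    (h : Relation.ReflTransGen r a b) : Relation.ReflTransGen r b a := by
  induction h with
  | refl => exact Relation.ReflTransGen.refl
  | tail _ e ih => exact Relation.ReflTransGen.head (hsym _ _ e) ih

theorem main_connect (hch : IsChordal G) : ∀ (W : Finset V), ∀ (x : V) (K K' : Finset V),
    MCin G W K → MCin G W K' → x ∈ K → x ∈ K' →
    Relation.ReflTransGen (edgeIn G W x) K K' := by
  classical
  intro W
  induction W using Finset.strongInduction with
  | _ W ih =>
    intro x K K' hK hK' hxK hxK'
    by_cases hKK' : K = K'
    · exact hKK' ▸ Relation.ReflTransGen.refl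
    by_cases hcomp : ∀ p ∈ W, ∀ q ∈ W, p ≠ q → G.Adj p q
    · exfalso
      apply hKK'
      have hKW : K = W := subset_antisymm hK.1 (fun y hy => hK.2.2 y hy
        (fun z hz hzy => hcomp y hy z (hK.1 hz) (fun he => hzy he.symm)))
      have hK'W : K' = W := subset_antisymm hK'.1 (fun y hy => hK'.2.2 y hy
        (fun z hz hzy => hcomp y hy z (hK'.1 hz) (fun he => hzy he.symm)))
      rw [hKW, hK'W]
    push_neg at hcomp
    obtain ⟨p₀, hp₀, q₀, hq₀, hpq, hnadj0⟩ := hcomp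
    obtain ⟨s₁, hs₁W, s₂, hs₂W, hs12, hnadj12, hsim₁, hsim₂⟩ :=
      dirac_pairs hch W p₀ hp₀ q₀ hq₀ hpq hnadj0
    obtain ⟨v, hsimp, hvx⟩ : ∃ v, SimpIn G W v ∧ v ≠ x := by
      by_cases h1 : s₁ = x
      · exact ⟨s₂, hsim₂, fun he => hs12 (h1.trans he.symm)⟩
      · exact ⟨s₁, hsim₁, h1⟩
    have hW'ss : W.erase v ⊂ W := Finset.erase_ssubset hsimp.1
    have hlift : ∀ Q Q', edgeIn G (W.erase v) x Q Q' →
        edgeIn G W x (if Q ⊆ nbrF G W v then insert v (nbrF G W v) else Q)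
          (if Q' ⊆ nbrF G W v then insert v (nbrF G W v) else Q') := by
      intro Q Q' he
      have h1 := he.1
      have h2 := he.2.1
      have h3 := he.2.2.1
      by_cases hQs : Q ⊆ nbrF G W v
      · have hQN : Q = nbrF G W v := Q_sub_nbrF hsimp h1 hQs
        subst hQN
        have hQ's : ¬ Q' ⊆ nbrF G W v := by
          intro hs
          exact h3 ((Q_sub_nbrF hsimp h2 hs).symm)
        rw [if_pos hQs, if_neg hQ's]
        exact edge_Kv hsimp he.2.2.2.1 he
      · by_cases hQ's : Q' ⊆ nbrF G W v
        · have hQ'N : Q' = nbrF G W v := Q_sub_nbrF hsimp h2 hQ's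
          subst hQ'N
          rw [if_pos hQ's, if_neg hQs]
          exact edgeIn_symm (edge_Kv hsimp he.2.2.2.2.1 (edgeIn_symm he))
        · rw [if_neg hQs, if_neg hQ's]
          have hQW : MCin G W Q := MC_unerase hsimp h1 (by
            obtain ⟨z, hzQ, hzn⟩ := Finset.not_subset.1 hQs
            exact ⟨z, hzQ, fun hadj => hzn (nbrF_mem.2 ⟨(Finset.mem_erase.1 (h1.1 hzQ)).2,
              (Finset.mem_erase.1 (h1.1 hzQ)).1, hadj⟩)⟩)
          have hQ'W : MCin G W Q' := MC_unerase hsimp h2 (by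
            obtain ⟨z, hzQ, hzn⟩ := Finset.not_subset.1 hQ's
            exact ⟨z, hzQ, fun hadj => hzn (nbrF_mem.2 ⟨(Finset.mem_erase.1 (h2.1 hzQ)).2,
              (Finset.mem_erase.1 (h2.1 hzQ)).1, hadj⟩)⟩)
          exact edge_up hsimp he hQW hQ'W
    have blockA : ∀ A B : Finset V, MCin G W A → MCin G W B → x ∈ A → x ∈ B →
        v ∈ A → v ∉ B → Relation.ReflTransGen (edgeIn G W x) A B := by
      intro A B hA hB hxA hxB hvA hvB
      have hAKv : A = insert v (nbrF G W v) := Kv_unique hsimp hA hvA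
      have hxN : x ∈ nbrF G W v := by
        have hx' : x ∈ insert v (nbrF G W v) := hAKv ▸ hxA
        rcases Finset.mem_insert.1 hx' with h | h
        · exact absurd h.symm hvx
        · exact h
      have hNsub : nbrF G W v ⊆ W.erase v := fun z hz =>
        Finset.mem_erase.2 ⟨(nbrF_mem.1 hz).2.1, (nbrF_mem.1 hz).1⟩
      obtain ⟨L, hLmc, hLsub⟩ := exists_MCin (W.erase v) (nbrF G W v) hNsub
        (nbrF_clique hsimp)
      have hxL : x ∈ L := hLsub hxN
      have hchain := ih _ hW'ss x L B hLmc (MC_erase hsimp hB hvB) hxL hxB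
      have hl := Relation.ReflTransGen.lift (p := edgeIn G W x)
        (fun Q => if Q ⊆ nbrF G W v then insert v (nbrF G W v) else Q)
        hlift _ _ hchain
      by_cases hLN : L ⊆ nbrF G W v
      · have hl' : Relation.ReflTransGen (edgeIn G W x) (insert v (nbrF G W v)) B := by
          simpa only [Function.onFun, if_pos hLN, if_neg (MC_not_sub_nbrF hsimp hB hvB)] using hl
        rw [hAKv]
        exact hl'
      · have hLne : L ≠ nbrF G W v := fun he => hLN (he ▸ subset_rfl)
        have hedge : edgeIn G W x A L := by
          rw [hAKv]
          exact edge_KvL hsimp hLmc hLsub hLne hxN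
        have hl' : Relation.ReflTransGen (edgeIn G W x) L B := by
          simpa only [Function.onFun, if_neg hLN, if_neg (MC_not_sub_nbrF hsimp hB hvB)] using hl
        exact Relation.ReflTransGen.head hedge hl'
    by_cases hvK : v ∈ K
    · by_cases hvK' : v ∈ K'
      · exact absurd ((Kv_unique hsimp hK hvK).trans (Kv_unique hsimp hK' hvK').symm) hKK'
      · exact blockA K K' hK hK' hxK hxK' hvK hvK'
    · by_cases hvK' : v ∈ K'
      · exact rtg_rev (fun _ _ => edgeIn_symm) (blockA K' K hK' hK hxK' hxK hvK' hvK)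
      · have hchain := ih _ hW'ss x K K' (MC_erase hsimp hK hvK) (MC_erase hsimp hK' hvK')
          hxK hxK'
        have hl := Relation.ReflTransGen.lift (p := edgeIn G W x)
          (fun Q => if Q ⊆ nbrF G W v then insert v (nbrF G W v) else Q)
          hlift _ _ hchain
        simpa only [Function.onFun, if_neg (MC_not_sub_nbrF hsimp hK hvK),
          if_neg (MC_not_sub_nbrF hsimp hK' hvK')] using hl


-- bridging to the original definitions
lemma cliqueF_iff {K : Finset V} : cliqueF G K ↔ G.IsClique (K : Set V) := by
  constructor
  · intro h a ha b hb hab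
    exact h a (by simpa using ha) b (by simpa using hb) hab
  · intro h a ha b hb hab
    exact h (by simpa using ha) (by simpa using hb) hab

lemma MCin_univ_iff {K : Finset V} : MCin G Finset.univ K ↔ MaxClique G K := by
  constructor
  · rintro ⟨-, hcl, hmax⟩
    refine ⟨cliqueF_iff.1 hcl, ?_⟩
    intro K' hK' hsub
    refine subset_antisymm hsub ?_
    intro y hy
    refine hmax y (Finset.mem_univ y) ?_
    intro z hz hzy
    exact hK' (by simpa using hy) (by simpa using hsub hz) (fun he => hzy he.symm)
  · rintro ⟨hcl, hmax⟩
    refine ⟨Finset.subset_univ _, cliqueF_iff.2 hcl, ?_⟩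
    intro y _ hadj
    have hins : G.IsClique ((insert y K : Finset V) : Set V) := by
      intro a ha b hb hab
      simp only [Finset.coe_insert, Set.mem_insert_iff, Finset.mem_coe] at ha hb
      rcases ha with rfl | ha
      · rcases hb with rfl | hb
        · exact absurd rfl hab
        · exact hadj b hb (fun he => hab he.symm)
      · rcases hb with rfl | hb
        · exact (hadj a ha (fun he => hab he)).symm
        · exact hcl (by simpa using ha) (by simpa using hb) hab
    have := hmax (insert y K) hins (Finset.subset_insert _ _)
    rw [this]
    exact Finset.mem_insert_self y K

lemma walk_to_reach {A : Finset V} : ∀ {a b : V} (p : G.Walk a b),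
    (∀ z ∈ p.support, z ∈ A) → reachIn G A a b := by
  intro a b p
  induction p with
  | nil => intro _; exact reachIn_refl _ _
  | @cons a y b h p ih =>
    intro hsup
    refine reachIn_trans (reachIn_adj h (hsup a (by simp)) ?_) (ih ?_)
    · exact hsup y (by simp [SimpleGraph.Walk.support_cons])
    · intro z hz
      exact hsup z (by simp [SimpleGraph.Walk.support_cons]; right; exact hz)

lemma edge_to_cg {x : V} {K K' : Finset V} (he : edgeIn G Finset.univ x K K')
    (hK : MaxClique G K) (hK' : MaxClique G K') :
    (cliqueGraph G).Adj ⟨K, hK⟩ ⟨K', hK'⟩ := by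
  refine ⟨fun hEq => he.2.2.1 (by simpa using Subtype.ext_iff.1 hEq), ?_⟩
  intro u hu w hw
  rw [Finset.mem_sdiff] at hu hw
  have huI : u ∉ K ∩ K' := fun h => hu.2 (Finset.mem_inter.1 h).2
  have hwI : w ∉ K ∩ K' := fun h => hw.2 (Finset.mem_inter.1 h).1
  constructor
  · refine ⟨huI, hwI, ?_⟩
    intro p
    by_contra hno
    push_neg at hno
    refine he.2.2.2.2.2 u hu.1 hu.2 w hw.1 hw.2 (walk_to_reach p ?_)
    intro z hz
    exact Finset.mem_sdiff.2 ⟨Finset.mem_univ z, hno z hz⟩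
  · intro S' hS' hsep
    obtain ⟨s, hsI, hsS'⟩ := Finset.exists_of_ssubset hS'
    have hsK := (Finset.mem_inter.1 hsI).1
    have hsK' := (Finset.mem_inter.1 hsI).2
    have hus : u ≠ s := fun he' => hu.2 (he' ▸ hsK')
    have hsw : s ≠ w := fun he' => hw.2 (he' ▸ hsK)
    have hadj1 : G.Adj u s := he.1.2.1 u hu.1 s hsK hus
    have hadj2 : G.Adj s w := he.2.1.2.1 s hsK' w hw.1 hsw
    obtain ⟨xx, hxx, hxxS⟩ := hsep.2.2 (SimpleGraph.Walk.cons hadj1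
      (SimpleGraph.Walk.cons hadj2 SimpleGraph.Walk.nil))
    simp only [SimpleGraph.Walk.support_cons, SimpleGraph.Walk.support_nil,
      List.mem_cons, List.mem_singleton] at hxx
    rcases hxx with rfl | rfl | rfl | hf
    · exact hu.2 ((Finset.mem_inter.1 (hS'.1 hxxS)).2)
    · exact hsS' hxxS
    · exact hw.2 ((Finset.mem_inter.1 (hS'.1 hxxS)).1)
    · exact (List.not_mem_nil hf).elim

lemma crux (hch : IsChordal G) {S : Finset V} {x : V} (hx : x ∉ S)
    (K M : CV G) (hK : x ∈ K.1) (hM : x ∈ M.1) :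
    (deleteLabel G S).Reachable K M := by
  have h1 : MCin G Finset.univ K.1 := MCin_univ_iff.2 K.2
  have h2 : MCin G Finset.univ M.1 := MCin_univ_iff.2 M.2
  have hchain := main_connect hch Finset.univ x K.1 M.1 h1 h2 hK hM
  suffices h : ∀ (B : Finset V), Relation.ReflTransGen (edgeIn G Finset.univ x) K.1 B →
      ∀ hB : MaxClique G B, (deleteLabel G S).Reachable K ⟨B, hB⟩ by
    exact h M.1 hchain M.2
  intro B hB
  induction hB with
  | refl =>
    intro hB
    have : (⟨K.1, hB⟩ : CV G) = K := Subtype.ext rfl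
    rw [this]
  | @tail b c hrtg he ih =>
    intro hC
    have hBmc : MaxClique G b := MCin_univ_iff.1 he.1
    have hCmc : MaxClique G c := MCin_univ_iff.1 he.2.1
    have hadj : (deleteLabel G S).Adj ⟨b, hBmc⟩ ⟨c, hC⟩ := by
      refine ⟨edge_to_cg he hBmc hC, ?_⟩
      intro hEq
      exact hx (hEq ▸ Finset.mem_inter.2 ⟨he.2.2.2.1, he.2.2.2.2.1⟩)
    exact (ih hBmc).trans hadj.reachable

lemma walk_avoid {S : Finset V}
    (hmin : ∀ A B : CV G, (cliqueGraph G).Adj A B → S.card ≤ (A.1 ∩ B.1).card) :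
    ∀ {A B : CV G}, (p : (deleteLabel G S).Walk A B) → ∀ a ∈ A.1, a ∉ S → ∀ b ∈ B.1, b ∉ S →
      ∃ q : G.Walk a b, ∀ z ∈ q.support, z ∉ S := by
  intro A B p
  induction p with
  | @nil C =>
    intro a ha haS b hb hbS
    by_cases hab : a = b
    · subst hab
      exact ⟨SimpleGraph.Walk.nil, by simpa using haS⟩
    · refine ⟨SimpleGraph.Walk.cons (C.2.1 (by simpa using ha) (by simpa using hb) hab)
        SimpleGraph.Walk.nil, ?_⟩
      intro z hz
      simp only [SimpleGraph.Walk.support_cons, SimpleGraph.Walk.support_nil,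
        List.mem_cons, List.mem_singleton] at hz
      rcases hz with rfl | rfl | hf
      · exact haS
      · exact hbS
      · exact (List.not_mem_nil hf).elim
  | @cons A A₁ B h p ih =>
    intro a ha haS b hb hbS
    have hcard := hmin _ _ h.1
    have hex : ∃ y, y ∈ A.1 ∩ A₁.1 ∧ y ∉ S := by
      by_contra hno
      push_neg at hno
      exact h.2 (Finset.eq_of_subset_of_card_le (fun y hy => hno y hy) hcard)
    obtain ⟨y, hy, hyS⟩ := hex
    obtain ⟨q, hq⟩ := ih y (Finset.mem_inter.1 hy).2 hyS b hb hbS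
    by_cases hay : a = y
    · subst hay
      exact ⟨q, hq⟩
    · refine ⟨SimpleGraph.Walk.cons
        (A.2.1 (by simpa using ha) (by simpa using (Finset.mem_inter.1 hy).1) hay) q, ?_⟩
      intro z hz
      rw [SimpleGraph.Walk.support_cons, List.mem_cons] at hz
      rcases hz with rfl | hz
      · exact haS
      · exact hq z hz

end CGAux

open CGAux in
/-- for `S` the label of a minimum-weight edge of `C(G)` and `u, v ∉ S`,
`S` is a `u`-`v` separator iff every maximal `u`-clique and every maximal `v`-clique lie
in different connected components of `C(G) ⊖ S`. -/
theorem stmt4 (G : SimpleGraph V) (hG : G.Connected) (hch : IsChordal G)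
    (S : Finset V)
    (hS : ∃ K K' : CV G, (cliqueGraph G).Adj K K' ∧ K.1 ∩ K'.1 = S)
    (hmin : ∀ K K' : CV G, (cliqueGraph G).Adj K K' → S.card ≤ (K.1 ∩ K'.1).card)
    (u v : V) (hu : u ∉ S) (hv : v ∉ S) :
    Separates G S u v ↔
      ∀ K K' : CV G, u ∈ K.1 → v ∈ K'.1 →
        (deleteLabel G S).connectedComponentMk K ≠ (deleteLabel G S).connectedComponentMk K' := by
  constructor
  · intro hsep K K' huK hvK' hEq
    have hreach : (deleteLabel G S).Reachable K K' := (SimpleGraph.ConnectedComponent.eq).1 hEq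
    obtain ⟨p⟩ := hreach
    obtain ⟨q, hq⟩ := walk_avoid hmin p u huK hu v hvK' hv
    obtain ⟨z, hz, hzS⟩ := hsep.2.2 q
    exact hq z hz hzS
  · intro hcomp
    refine ⟨hu, hv, ?_⟩
    intro p
    by_contra hno
    push_neg at hno
    have hsing : cliqueF G {u} := by
      intro a ha b hb hab
      simp only [Finset.mem_singleton] at ha hb
      exact absurd (ha.trans hb.symm) hab
    obtain ⟨K₀f, hK₀mc, hK₀sub⟩ := exists_MCin Finset.univ {u} (Finset.subset_univ _) hsing
    have huK₀ : u ∈ K₀f := hK₀sub (Finset.mem_singleton_self u)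
    have key : ∀ {a b : V} (q : G.Walk a b), (∀ z ∈ q.support, z ∉ S) →
        ∀ (A : CV G), a ∈ A.1 → ∃ B : CV G, b ∈ B.1 ∧ (deleteLabel G S).Reachable A B := by
      intro a b q
      induction q with
      | nil => intro _ A ha; exact ⟨A, ha, SimpleGraph.Reachable.refl A⟩
      | @cons a z b hadj q ih =>
        intro hsup A ha
        have haS : a ∉ S := hsup a (by simp)
        have hzS : z ∉ S := hsup z (by simp [SimpleGraph.Walk.support_cons])
        have hpair : cliqueF G {a, z} := by
          intro p1 hp1 p2 hp2 hne
          simp only [Finset.mem_insert, Finset.mem_singleton] at hp1 hp2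
          rcases hp1 with rfl | rfl
          · rcases hp2 with rfl | rfl
            · exact absurd rfl hne
            · exact hadj
          · rcases hp2 with rfl | rfl
            · exact hadj.symm
            · exact absurd rfl hne
        obtain ⟨Mf, hMmc, hMsub⟩ := exists_MCin Finset.univ {a, z} (Finset.subset_univ _) hpair
        have haM : a ∈ Mf := hMsub (by simp)
        have hzM : z ∈ Mf := hMsub (by simp)
        have h1 : (deleteLabel G S).Reachable A ⟨Mf, MCin_univ_iff.1 hMmc⟩ :=
          crux hch haS A _ ha haM
        obtain ⟨B, hbB, h2⟩ := ih (fun w hw => hsup w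
          (by rw [SimpleGraph.Walk.support_cons]; exact List.mem_cons_of_mem _ hw))
          ⟨Mf, MCin_univ_iff.1 hMmc⟩ hzM
        exact ⟨B, hbB, h1.trans h2⟩
    obtain ⟨K', hvK', hreach⟩ := key p hno ⟨K₀f, MCin_univ_iff.1 hK₀mc⟩ huK₀
    exact hcomp _ K' huK₀ hvK' (SimpleGraph.ConnectedComponent.sound hreach)
end

section
/- Let G be a connected chordal graph and let U1U2 and U3U4 be two distinct edges of the layer structure of C(G) having the same label S. Then the units in {U1,U2,U3,U4} are pairwise adjacent in the layer structure, and every edge among them has label S. -/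
open SimpleGraph

attribute [local instance] Classical.propDecidable
set_option linter.unusedSectionVars false

variable {V : Type*} [Fintype V] [DecidableEq V]

namespace ChordalAux

variable {V : Type*} [Fintype V] [DecidableEq V] (G : SimpleGraph V)

/-- neighbors of `v` inside `s` -/
noncomputable def NS (s : Finset V) (v : V) : Finset V := s.filter (G.Adj v)

def SimpIn (s : Finset V) (v : V) : Prop :=
  ∀ x ∈ NS G s v, ∀ y ∈ NS G s v, x ≠ y → G.Adj x y

def CliqueIn (s K : Finset V) : Prop := K ⊆ s ∧ G.IsClique (K : Set V)

def MaxCliqueIn (s K : Finset V) : Prop :=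
  CliqueIn G s K ∧ ∀ K', CliqueIn G s K' → K ⊆ K' → K = K'

def RIn (s : Finset V) (u v : V) : Prop :=
  ∃ p : G.Walk u v, ∀ x ∈ p.support, x ∈ s

def SepIn (s T : Finset V) (u v : V) : Prop :=
  u ∉ T ∧ v ∉ T ∧ ¬ RIn G (s \ T) u v

def MinSepIn (s T : Finset V) (u v : V) : Prop :=
  SepIn G s T u v ∧ ∀ T' : Finset V, T' ⊂ T → ¬ SepIn G s T' u v

def AdjIn (s K L : Finset V) : Prop :=
  K ≠ L ∧ ∀ u ∈ K \ L, ∀ v ∈ L \ K, MinSepIn G s (K ∩ L) u v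

def ChordalIn (s : Finset V) : Prop :=
  ∀ n : ℕ, 4 ≤ n →
    ¬ ∃ f : Fin n ↪ V, (∀ i, f i ∈ s) ∧ ∀ i j, (cycleGraph n).Adj i j ↔ G.Adj (f i) (f j)

def CompleteIn (s : Finset V) : Prop := ∀ x ∈ s, ∀ y ∈ s, x ≠ y → G.Adj x y

variable {G}

lemma chordalIn_mono {s t : Finset V} (h : t ⊆ s) (hs : ChordalIn G s) : ChordalIn G t := by
  intro n hn ⟨f, hmem, hf⟩
  exact hs n hn ⟨f, fun i => h (hmem i), hf⟩

/-! ### RIn basics -/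

lemma RIn.mem_left {s : Finset V} {u v : V} (h : RIn G s u v) : u ∈ s := by
  obtain ⟨p, hp⟩ := h; exact hp u p.start_mem_support

lemma RIn.mem_right {s : Finset V} {u v : V} (h : RIn G s u v) : v ∈ s := by
  obtain ⟨p, hp⟩ := h; exact hp v p.end_mem_support

lemma RIn.refl {s : Finset V} {u : V} (h : u ∈ s) : RIn G s u u :=
  ⟨Walk.nil, by simp [h]⟩

lemma RIn.symm {s : Finset V} {u v : V} (h : RIn G s u v) : RIn G s v u := by
  obtain ⟨p, hp⟩ := h
  exact ⟨p.reverse, by intro x hx; rw [Walk.support_reverse, List.mem_reverse] at hx; exact hp x hx⟩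

lemma RIn.trans {s : Finset V} {u v w : V} (h : RIn G s u v) (h' : RIn G s v w) :
    RIn G s u w := by
  obtain ⟨p, hp⟩ := h; obtain ⟨q, hq⟩ := h'
  refine ⟨p.append q, ?_⟩
  intro x hx
  rw [Walk.mem_support_append_iff] at hx
  exact hx.elim (hp x) (hq x)

lemma RIn.adj_extend {s : Finset V} {u v y : V} (h : RIn G s u v) (hadj : G.Adj v y)
    (hy : y ∈ s) : RIn G s u y :=
  h.trans ⟨Walk.cons hadj Walk.nil, by intro x hx; simp at hx; rcases hx with rfl | rfl
                                       exacts [h.mem_right, hy]⟩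

lemma RIn.of_adj {s : Finset V} {u v : V} (hadj : G.Adj u v) (hu : u ∈ s) (hv : v ∈ s) :
    RIn G s u v :=
  (RIn.refl hu).adj_extend hadj hv

lemma RIn.mono {s t : Finset V} (hst : s ⊆ t) {u v : V} (h : RIn G s u v) : RIn G t u v := by
  obtain ⟨p, hp⟩ := h; exact ⟨p, fun x hx => hst (hp x hx)⟩

/-- every support vertex is reachable within the same vertex set -/
lemma RIn.support_reach {s : Finset V} {u v : V} (p : G.Walk u v)
    (hp : ∀ x ∈ p.support, x ∈ s) {z : V} (hz : z ∈ p.support) : RIn G s u z :=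
  ⟨p.takeUntil z hz, fun x hx => hp x (Walk.support_takeUntil_subset _ _ hx)⟩

/-! ### getVert lemmas -/

lemma support_eq_map_getVert {u v : V} (p : G.Walk u v) :
    p.support = (List.range (p.length + 1)).map p.getVert := by
  induction p with
  | nil => simp [Walk.getVert]
  | cons h q ih =>
      rw [Walk.support_cons, Walk.length_cons, List.range_succ_eq_map, List.map_cons,
        List.map_map, ih]
      rfl

lemma getVert_mem_support {u v : V} (p : G.Walk u v) {i : ℕ} (hi : i ≤ p.length) :
    p.getVert i ∈ p.support := by
  rw [support_eq_map_getVert]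
  exact List.mem_map_of_mem (List.mem_range.2 (Nat.lt_succ_of_le hi))

lemma getVert_inj {u v : V} {p : G.Walk u v} (hp : p.IsPath) {i j : ℕ}
    (hi : i ≤ p.length) (hj : j ≤ p.length) (h : p.getVert i = p.getVert j) : i = j := by
  have hnd := hp.support_nodup
  rw [support_eq_map_getVert] at hnd
  have hlen : ((List.range (p.length + 1)).map p.getVert).length = p.length + 1 := by simp
  have := List.Nodup.get_inj_iff hnd (i := ⟨i, by simpa [hlen] using Nat.lt_succ_of_le hi⟩)
    (j := ⟨j, by simpa [hlen] using Nat.lt_succ_of_le hj⟩)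
  simp only [List.get_eq_getElem, List.getElem_map, List.getElem_range, Fin.mk.injEq] at this
  exact this.1 h

/-- dropping the first `j` steps of a walk -/
lemma exists_drop {u v : V} (p : G.Walk u v) (j : ℕ) (hj : j ≤ p.length) :
    ∃ q : G.Walk (p.getVert j) v, q.length + j = p.length ∧
      ∀ x ∈ q.support, x ∈ p.support := by
  induction j generalizing u p with
  | zero =>
      refine ⟨p.copy (p.getVert_zero).symm rfl, by simp, ?_⟩
      intro x hx; simpa using hx
  | succ n ih =>
      cases p with
      | nil => simp at hj
      | cons h q =>
          have hj' : n ≤ q.length := by simpa [Walk.length_cons] using hj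
          obtain ⟨r, hr1, hr2⟩ := ih q hj'
          refine ⟨r.copy (by rw [Walk.getVert_cons_succ]) rfl, ?_, ?_⟩
          · simp only [Walk.length_copy, Walk.length_cons]; omega
          · intro x hx
            rw [Walk.support_copy] at hx
            exact List.mem_cons_of_mem _ (hr2 x hx)

/-- chord surgery: an adjacency between non-consecutive vertices yields a shorter walk -/
lemma surgery {u v : V} (p : G.Walk u v) (i j : ℕ) (hij : i + 1 < j) (hj : j ≤ p.length)
    (hadj : G.Adj (p.getVert i) (p.getVert j)) :
    ∃ q : G.Walk u v, q.length < p.length ∧ ∀ x ∈ q.support, x ∈ p.support := by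
  induction i generalizing u p j with
  | zero =>
      obtain ⟨r, hr1, hr2⟩ := exists_drop p j hj
      rw [p.getVert_zero] at hadj
      refine ⟨Walk.cons hadj r, ?_, ?_⟩
      · rw [Walk.length_cons]; omega
      · intro x hx
        rw [Walk.support_cons] at hx
        rcases List.mem_cons.1 hx with rfl | hx
        · exact p.start_mem_support
        · exact hr2 x hx
  | succ n ih =>
      cases p with
      | nil => simp at hj; omega
      | cons h q =>
          have hj' : j - 1 ≤ q.length := by simp [Walk.length_cons] at hj; omega
          have hij' : n + 1 < j - 1 := by omega
          have hadj' : G.Adj (q.getVert n) (q.getVert (j - 1)) := by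
            have e1 : (Walk.cons h q).getVert (n + 1) = q.getVert n := rfl
            have e2 : (Walk.cons h q).getVert j = q.getVert (j - 1) := by
              rw [Walk.getVert_cons q h (by omega)]
            rwa [e1, e2] at hadj
          obtain ⟨r, hr1, hr2⟩ := ih q (j - 1) hij' hj' hadj'
          refine ⟨Walk.cons h r, ?_, ?_⟩
          · rw [Walk.length_cons, Walk.length_cons]; omega
          · intro x hx
            rw [Walk.support_cons] at hx
            rcases List.mem_cons.1 hx with rfl | hx
            · exact Walk.start_mem_support _
            · exact List.mem_cons_of_mem _ (hr2 x hx)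

/-! ### simplicial shortcut -/

lemma clique_pair {K : Finset V} (hK : G.IsClique (K : Set V)) {x y : V}
    (hx : x ∈ K) (hy : y ∈ K) (hne : x ≠ y) : G.Adj x y :=
  hK (by exact_mod_cast hx) (by exact_mod_cast hy) hne

lemma shortcut_aux {s : Finset V} {v : V} (hv : SimpIn G s v) :
    ∀ (n : ℕ) (a b : V) (p : G.Walk a b), p.length ≤ n → (∀ x ∈ p.support, x ∈ s) →
      a ≠ v → b ≠ v →
      ∃ q : G.Walk a b, (∀ x ∈ q.support, x ∈ p.support) ∧ v ∉ q.support := by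
  intro n
  induction n with
  | zero =>
      intro a b p hlen hsupp ha hb
      cases p with
      | nil => exact ⟨Walk.nil, by simp, by simp [Ne.symm ha]⟩
      | cons h q => simp [Walk.length_cons] at hlen
  | succ n ih =>
      intro a b p hlen hsupp ha hb
      cases p with
      | nil => exact ⟨Walk.nil, by simp, by simp [Ne.symm ha]⟩
      | cons h q =>
          rename_i x
          by_cases hx : x = v
          · cases q with
            | nil => exact absurd hx hb
            | cons h2 q2 =>
                rename_i y
                have hyv : y ≠ v := fun hyv => G.loopless.irrefl v (by rw [hyv, hx] at h2; exact h2)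
                have hq2supp : ∀ z ∈ q2.support,
                    z ∈ (Walk.cons h (Walk.cons h2 q2)).support := by
                  intro z hz
                  simp only [Walk.support_cons, List.mem_cons]
                  tauto
                by_cases hy : y = a
                · obtain ⟨q', hq'1, hq'2⟩ := ih a b (q2.copy hy rfl)
                    (by simp [Walk.length_cons] at hlen ⊢; omega)
                    (by intro z hz; rw [Walk.support_copy] at hz
                        exact hsupp z (hq2supp z hz)) ha hb
                  refine ⟨q', ?_, hq'2⟩
                  intro z hz
                  have := hq'1 z hz
                  rw [Walk.support_copy] at this
                  exact hq2supp z this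
                · have hay : G.Adj a y := by
                    have hamem : a ∈ NS G s v := by
                      rw [NS, Finset.mem_filter]
                      exact ⟨hsupp a (Walk.start_mem_support _), hx ▸ h.symm⟩
                    have hymem : y ∈ NS G s v := by
                      rw [NS, Finset.mem_filter]
                      exact ⟨hsupp y (hq2supp y q2.start_mem_support), hx ▸ h2⟩
                    exact hv a hamem y hymem (Ne.symm hy)
                  have hlen' : (Walk.cons hay q2).length ≤ n := by
                    simp [Walk.length_cons] at hlen ⊢; omega
                  have hsupp' : ∀ z ∈ (Walk.cons hay q2).support, z ∈ s := by
                    intro z hz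
                    rw [Walk.support_cons] at hz
                    rcases List.mem_cons.1 hz with rfl | hz
                    · exact hsupp z (Walk.start_mem_support _)
                    · exact hsupp z (hq2supp z hz)
                  obtain ⟨q', hq'1, hq'2⟩ := ih a b (Walk.cons hay q2) hlen' hsupp' ha hb
                  refine ⟨q', ?_, hq'2⟩
                  intro z hz
                  have := hq'1 z hz
                  rw [Walk.support_cons] at this
                  rcases List.mem_cons.1 this with rfl | hmem
                  · exact Walk.start_mem_support _
                  · exact hq2supp z hmem
          · obtain ⟨q', hq'1, hq'2⟩ := ih x b q
              (by simp [Walk.length_cons] at hlen ⊢; omega)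
              (fun z hz => hsupp z (by rw [Walk.support_cons]; exact List.mem_cons_of_mem _ hz))
              hx hb
            refine ⟨Walk.cons h q', ?_, ?_⟩
            · intro z hz
              rw [Walk.support_cons] at hz ⊢
              rcases List.mem_cons.1 hz with rfl | hz
              · exact List.mem_cons_self
              · exact List.mem_cons_of_mem _ (hq'1 z hz)
            · rw [Walk.support_cons]
              intro hmem
              rcases List.mem_cons.1 hmem with h' | h'
              · exact ha h'.symm
              · exact hq'2 h'

lemma shortcut {s : Finset V} {v : V} (hv : SimpIn G s v) {a b : V} (p : G.Walk a b)
    (hsupp : ∀ x ∈ p.support, x ∈ s) (ha : a ≠ v) (hb : b ≠ v) :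
    ∃ q : G.Walk a b, (∀ x ∈ q.support, x ∈ p.support) ∧ v ∉ q.support :=
  shortcut_aux hv p.length a b p le_rfl hsupp ha hb

/-! ### clique lemmas -/

lemma exists_maxclique {s c : Finset V} (hc : CliqueIn G s c) :
    ∃ K, MaxCliqueIn G s K ∧ c ⊆ K := by
  classical
  set F := (s.powerset.filter (fun K => CliqueIn G s K ∧ c ⊆ K)) with hF
  have hcF : c ∈ F := by
    rw [hF, Finset.mem_filter, Finset.mem_powerset]
    exact ⟨hc.1, hc, Finset.Subset.refl c⟩
  obtain ⟨K, hKF, hKmax⟩ := F.exists_max_image Finset.card ⟨c, hcF⟩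
  rw [hF, Finset.mem_filter, Finset.mem_powerset] at hKF
  refine ⟨K, ⟨hKF.2.1, ?_⟩, hKF.2.2⟩
  intro K' hK' hsub
  have hK'F : K' ∈ F := by
    rw [hF, Finset.mem_filter, Finset.mem_powerset]
    exact ⟨hK'.1, hK', hKF.2.2.trans hsub⟩
  exact Finset.eq_of_subset_of_card_le hsub (hKmax K' hK'F)

lemma NS_subset_erase {s : Finset V} {v : V} : NS G s v ⊆ s.erase v := by
  intro x hx
  rw [NS, Finset.mem_filter] at hx
  exact Finset.mem_erase.2 ⟨fun h => G.loopless.irrefl v (h ▸ hx.2), hx.1⟩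

lemma NS_clique {s : Finset V} {v : V} (hv : SimpIn G s v) :
    G.IsClique ((NS G s v : Finset V) : Set V) := by
  intro x hx y hy hne
  exact hv x (by exact_mod_cast hx) y (by exact_mod_cast hy) hne

lemma insert_NS_clique {s : Finset V} {v : V} (hv : SimpIn G s v) :
    G.IsClique ((insert v (NS G s v) : Finset V) : Set V) := by
  rw [Finset.coe_insert]
  refine (NS_clique hv).insert ?_
  intro x hx hne
  have : x ∈ NS G s v := by exact_mod_cast hx
  rw [NS, Finset.mem_filter] at this
  exact this.2

lemma maxclique_insert_NS {s : Finset V} {v : V} (hs : v ∈ s) (hv : SimpIn G s v) :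
    MaxCliqueIn G s (insert v (NS G s v)) := by
  refine ⟨⟨?_, insert_NS_clique hv⟩, ?_⟩
  · intro x hx
    rcases Finset.mem_insert.1 hx with rfl | hx
    · exact hs
    · exact (Finset.mem_erase.1 (NS_subset_erase hx)).2
  · intro K' hK' hsub
    by_contra hne
    obtain ⟨x, hxK', hxn⟩ := Finset.exists_of_ssubset (Finset.ssubset_iff_subset_ne.2 ⟨hsub, hne⟩)
    have hxv : x ≠ v := fun h => hxn (h ▸ Finset.mem_insert_self _ _)
    have : x ∈ NS G s v := by
      rw [NS, Finset.mem_filter]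
      exact ⟨hK'.1 hxK', clique_pair hK'.2 (hsub (Finset.mem_insert_self _ _)) hxK' hxv.symm⟩
    exact hxn (Finset.mem_insert_of_mem this)

lemma maxclique_mem_v {s : Finset V} {v : V} (hs : v ∈ s) (hv : SimpIn G s v)
    {K : Finset V} (hK : MaxCliqueIn G s K) (hvK : v ∈ K) : K = insert v (NS G s v) := by
  have hsub : K ⊆ insert v (NS G s v) := by
    intro x hx
    by_cases hxv : x = v
    · exact hxv ▸ Finset.mem_insert_self _ _
    · refine Finset.mem_insert_of_mem ?_
      rw [NS, Finset.mem_filter]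
      exact ⟨hK.1.1 hx, clique_pair hK.1.2 hvK hx (Ne.symm hxv)⟩
  exact hK.2 _ (maxclique_insert_NS hs hv).1 hsub

lemma maxclique_erase_of_not_mem {s : Finset V} {v : V} {K : Finset V}
    (hK : MaxCliqueIn G s K) (hvK : v ∉ K) : MaxCliqueIn G (s.erase v) K := by
  refine ⟨⟨?_, hK.1.2⟩, ?_⟩
  · intro x hx
    exact Finset.mem_erase.2 ⟨fun h => hvK (h ▸ hx), hK.1.1 hx⟩
  · intro K' hK' hsub
    exact hK.2 K' ⟨hK'.1.trans (Finset.erase_subset _ _), hK'.2⟩ hsub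

lemma maxclique_lift {s : Finset V} {v : V} (hs : v ∈ s) (hv : SimpIn G s v)
    {K : Finset V} (hK : MaxCliqueIn G (s.erase v) K) (hKN : ¬ K ⊆ NS G s v) :
    MaxCliqueIn G s K := by
  refine ⟨⟨hK.1.1.trans (Finset.erase_subset _ _), hK.1.2⟩, ?_⟩
  intro K' hK' hsub
  have hvK' : v ∉ K' := by
    intro hvK'
    apply hKN
    intro x hx
    rw [NS, Finset.mem_filter]
    have hxv : x ≠ v := fun h => (Finset.mem_erase.1 (hK.1.1 hx)).1 h
    exact ⟨(Finset.mem_erase.1 (hK.1.1 hx)).2, clique_pair hK'.2 hvK' (hsub hx) hxv.symm⟩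
  refine hK.2 K' ⟨?_, hK'.2⟩ hsub
  intro x hx
  exact Finset.mem_erase.2 ⟨fun h => hvK' (h ▸ hx), hK'.1 hx⟩

lemma adjIn_symm {s K L : Finset V} (h : AdjIn G s K L) : AdjIn G s L K := by
  obtain ⟨hne, h⟩ := h
  refine ⟨hne.symm, fun u hu v hv => ?_⟩
  obtain ⟨⟨h1, h2, h3⟩, hmin⟩ := h v hv u hu
  rw [Finset.inter_comm]
  exact ⟨⟨h2, h1, fun hr => h3 hr.symm⟩, fun T' hT' hsep =>
    hmin T' hT' ⟨hsep.2.1, hsep.1, fun hr => hsep.2.2 hr.symm⟩⟩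

/-! ### edge transfer lemmas for the simplicial induction -/

lemma rin_erase_of_rin {s T : Finset V} {v u w : V} (hv : SimpIn G s v)
    (hu : u ≠ v) (hw : w ≠ v) (h : RIn G (s \ T) u w) (hvs : v ∉ T → True) :
    RIn G ((s.erase v) \ T) u w := by
  obtain ⟨p, hp⟩ := h
  obtain ⟨q, hq1, hq2⟩ := shortcut hv p (fun x hx => (Finset.mem_sdiff.1 (hp x hx)).1) hu hw
  refine ⟨q, ?_⟩
  intro x hx
  have hxm := hp x (hq1 x hx)
  rw [Finset.mem_sdiff] at hxm ⊢
  refine ⟨Finset.mem_erase.2 ⟨fun hxv => hq2 (hxv ▸ hx), hxm.1⟩, hxm.2⟩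

lemma persist {s : Finset V} {v : V} (hvs : v ∈ s) (hv : SimpIn G s v) {K L : Finset V}
    (hK : K ⊆ s.erase v) (hL : L ⊆ s.erase v) (h : AdjIn G (s.erase v) K L) :
    AdjIn G s K L := by
  refine ⟨h.1, fun u hu w hw => ?_⟩
  obtain ⟨⟨h1, h2, h3⟩, hmin⟩ := h.2 u hu w hw
  refine ⟨⟨h1, h2, ?_⟩, ?_⟩
  · intro hr
    apply h3
    exact rin_erase_of_rin hv (fun h' => (Finset.mem_erase.1 (hK (Finset.mem_sdiff.1 hu).1)).1 h')
      (fun h' => (Finset.mem_erase.1 (hL (Finset.mem_sdiff.1 hw).1)).1 h') hr (fun _ => trivial)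
  · intro T' hT' hsep
    refine hmin T' hT' ⟨hsep.1, hsep.2.1, ?_⟩
    intro hr
    exact hsep.2.2 (hr.mono (Finset.sdiff_subset_sdiff (Finset.erase_subset _ _) le_rfl))

lemma relabel {s : Finset V} {v : V} (hvs : v ∈ s) (hv : SimpIn G s v) {L : Finset V}
    (hL : L ⊆ s.erase v) (hLcl : G.IsClique (L : Set V))
    (h : AdjIn G (s.erase v) (NS G s v) L) :
    AdjIn G s (insert v (NS G s v)) L := by
  have hvL : v ∉ L := fun hvL => (Finset.mem_erase.1 (hL hvL)).1 rfl
  have hvN : v ∉ NS G s v := fun hvN => (Finset.mem_erase.1 (NS_subset_erase hvN)).1 rfl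
  have hinter : insert v (NS G s v) ∩ L = NS G s v ∩ L := by
    ext x
    simp only [Finset.mem_inter, Finset.mem_insert]
    constructor
    · rintro ⟨rfl | hx, hxL⟩
      · exact absurd hxL hvL
      · exact ⟨hx, hxL⟩
    · rintro ⟨hx, hxL⟩; exact ⟨Or.inr hx, hxL⟩
  have hdiffL : L \ insert v (NS G s v) = L \ NS G s v := by
    ext x
    simp only [Finset.mem_sdiff, Finset.mem_insert, not_or]
    constructor
    · rintro ⟨hx, _, hn⟩; exact ⟨hx, hn⟩
    · rintro ⟨hx, hn⟩; exact ⟨hx, fun hxv => hvL (hxv ▸ hx), hn⟩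
  refine ⟨?_, ?_⟩
  · intro heq
    exact hvL (heq ▸ Finset.mem_insert_self v _)
  · intro u hu w hw
    rw [hdiffL] at hw
    rw [hinter]
    have hwm := Finset.mem_sdiff.1 hw
    have hwv : w ≠ v := fun h' => (Finset.mem_erase.1 (hL hwm.1)).1 h'
    have hws : w ∈ s := (Finset.mem_erase.1 (hL hwm.1)).2
    rcases Finset.mem_insert.1 (Finset.mem_sdiff.1 hu).1 with heq | huN
    · -- u = v
      subst u
      refine ⟨⟨fun hm => hvN (Finset.mem_inter.1 hm).1,
              fun hm => hwm.2 (Finset.mem_inter.1 hm).1, ?_⟩, ?_⟩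
      · rintro ⟨p, hp⟩
        cases p with
        | nil => exact hwv rfl
        | cons hadj p' =>
            rename_i x
            have hxsupp : x ∈ (Walk.cons hadj p').support := by
              rw [Walk.support_cons]; exact List.mem_cons_of_mem _ p'.start_mem_support
            have hxmem := Finset.mem_sdiff.1 (hp x hxsupp)
            have hxN : x ∈ NS G s v := by
              rw [NS, Finset.mem_filter]
              exact ⟨hxmem.1, hadj⟩
            by_cases hxL : x ∈ L
            · exact hxmem.2 (Finset.mem_inter.2 ⟨hxN, hxL⟩)
            · have hxv : x ≠ v := fun h' => hvN (h' ▸ hxN)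
              have hold := h.2 x (Finset.mem_sdiff.2 ⟨hxN, hxL⟩) w hw
              apply hold.1.2.2
              have hp'supp : ∀ z ∈ p'.support, z ∈ s \ (NS G s v ∩ L) := by
                intro z hz
                exact hp z (by rw [Walk.support_cons]; exact List.mem_cons_of_mem _ hz)
              exact rin_erase_of_rin hv hxv hwv ⟨p', hp'supp⟩ (fun _ => trivial)
      · intro T' hT' hsep
        obtain ⟨x, hxm, hxT'⟩ := Finset.exists_of_ssubset hT'
        have hxN := (Finset.mem_inter.1 hxm).1
        have hxL := (Finset.mem_inter.1 hxm).2
        have hadjvx : G.Adj v x := by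
          rw [NS, Finset.mem_filter] at hxN; exact hxN.2
        have hxw : x ≠ w := fun h' => hwm.2 (h' ▸ hxN)
        have hadjxw : G.Adj x w := clique_pair hLcl hxL hwm.1 hxw
        apply hsep.2.2
        refine ⟨Walk.cons hadjvx (Walk.cons hadjxw Walk.nil), ?_⟩
        intro z hz
        simp only [Walk.support_cons, Walk.support_nil, List.mem_cons,
          List.mem_singleton] at hz
        have hT'N : T' ⊆ NS G s v := (subset_of_ssubset hT').trans Finset.inter_subset_left
        rcases hz with rfl | rfl | rfl | hfalse
        · exact Finset.mem_sdiff.2 ⟨hvs, fun hm => hvN (hT'N hm)⟩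
        · exact Finset.mem_sdiff.2 ⟨(Finset.mem_erase.1 (NS_subset_erase hxN)).2, hxT'⟩
        · exact Finset.mem_sdiff.2 ⟨hws, fun hm => hwm.2 (hT'N hm)⟩
        · simp at hfalse
    · -- u ∈ NS G s v
      have huL : u ∉ L := (Finset.mem_sdiff.1 hu).2
      have huv : u ≠ v := fun h' => hvN (h' ▸ huN)
      have hold := h.2 u (Finset.mem_sdiff.2 ⟨huN, huL⟩) w hw
      refine ⟨⟨hold.1.1, hold.1.2.1, ?_⟩, ?_⟩
      · intro hr
        exact hold.1.2.2 (rin_erase_of_rin hv huv hwv hr (fun _ => trivial))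
      · intro T' hT' hsep
        refine hold.2 T' hT' ⟨hsep.1, hsep.2.1, ?_⟩
        intro hr
        exact hsep.2.2 (hr.mono (Finset.sdiff_subset_sdiff (Finset.erase_subset _ _) le_rfl))

lemma newedge {s : Finset V} {v : V} (hvs : v ∈ s) (hv : SimpIn G s v) {M : Finset V}
    (hM : M ⊆ s.erase v) (hMcl : G.IsClique (M : Set V)) (hsub : NS G s v ⊆ M) :
    AdjIn G s (insert v (NS G s v)) M := by
  have hvM : v ∉ M := fun h' => (Finset.mem_erase.1 (hM h')).1 rfl
  have hvN : v ∉ NS G s v := fun hvN => (Finset.mem_erase.1 (NS_subset_erase hvN)).1 rfl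
  have hinter : insert v (NS G s v) ∩ M = NS G s v := by
    ext x
    simp only [Finset.mem_inter, Finset.mem_insert]
    constructor
    · rintro ⟨rfl | hx, hxM⟩
      · exact absurd hxM hvM
      · exact hx
    · intro hx; exact ⟨Or.inr hx, hsub hx⟩
  refine ⟨fun heq => hvM (heq ▸ Finset.mem_insert_self v _), ?_⟩
  intro u hu w hw
  rw [hinter]
  have hwm := Finset.mem_sdiff.1 hw
  have hwN : w ∉ NS G s v := fun h' => hwm.2 (Finset.mem_insert_of_mem h')
  have hwv : w ≠ v := fun h' => (Finset.mem_erase.1 (hM hwm.1)).1 h'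
  have hws : w ∈ s := (Finset.mem_erase.1 (hM hwm.1)).2
  have humem := Finset.mem_sdiff.1 hu
  have hueq : u = v := by
    rcases Finset.mem_insert.1 humem.1 with heq | huN
    · exact heq
    · exact absurd (hsub huN) humem.2
  subst u
  refine ⟨⟨hvN, hwN, ?_⟩, ?_⟩
  · rintro ⟨p, hp⟩
    cases p with
    | nil => exact hwv rfl
    | cons hadj p' =>
        rename_i x
        have hxsupp : x ∈ (Walk.cons hadj p').support := by
          rw [Walk.support_cons]; exact List.mem_cons_of_mem _ p'.start_mem_support
        have hxmem := Finset.mem_sdiff.1 (hp x hxsupp)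
        apply hxmem.2
        rw [NS, Finset.mem_filter]
        exact ⟨hxmem.1, hadj⟩
  · intro T' hT' hsep
    obtain ⟨x, hxN, hxT'⟩ := Finset.exists_of_ssubset hT'
    have hadjvx : G.Adj v x := by
      rw [NS, Finset.mem_filter] at hxN; exact hxN.2
    have hxw : x ≠ w := fun h' => hwN (h' ▸ hxN)
    have hadjxw : G.Adj x w := clique_pair hMcl (hsub hxN) hwm.1 hxw
    apply hsep.2.2
    refine ⟨Walk.cons hadjvx (Walk.cons hadjxw Walk.nil), ?_⟩
    intro z hz
    simp only [Walk.support_cons, Walk.support_nil, List.mem_cons, List.mem_singleton] at hz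
    have hT'N : T' ⊆ NS G s v := subset_of_ssubset hT'
    rcases hz with rfl | rfl | rfl | hfalse
    · exact Finset.mem_sdiff.2 ⟨hvs, fun hm => hvN (hT'N hm)⟩
    · exact Finset.mem_sdiff.2 ⟨(Finset.mem_erase.1 (NS_subset_erase hxN)).2, hxT'⟩
    · exact Finset.mem_sdiff.2 ⟨hws, fun hm => hwN (hT'N hm)⟩
    · simp at hfalse

/-! ### cycle graph adjacency characterization -/

lemma cyc_adj {n : ℕ} (hn : 2 ≤ n) (i j : Fin n) :
    (cycleGraph n).Adj i j ↔
      ((j : ℕ) = (i : ℕ) + 1 ∨ (i : ℕ) = (j : ℕ) + 1 ∨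
        ((i : ℕ) = 0 ∧ (j : ℕ) = n - 1) ∨ ((j : ℕ) = 0 ∧ (i : ℕ) = n - 1)) := by
  obtain ⟨m, rfl⟩ : ∃ m, n = m + 2 := ⟨n - 2, by omega⟩
  rw [cycleGraph_adj]
  have key : ∀ a b : Fin (m + 2), a - b = 1 ↔
      ((a : ℕ) = (b : ℕ) + 1 ∨ ((b : ℕ) = m + 1 ∧ (a : ℕ) = 0)) := by
    intro a b
    rw [sub_eq_iff_eq_add, add_comm 1 b, Fin.ext_iff, Fin.val_add_one]
    have hb := b.isLt
    have ha := a.isLt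
    by_cases hbl : b = Fin.last (m + 1)
    · subst hbl
      rw [if_pos rfl, Fin.val_last]
      omega
    · rw [if_neg hbl]
      have : (b : ℕ) ≠ m + 1 := fun h => hbl (Fin.ext (by rw [Fin.val_last]; exact h))
      omega
  rw [key, key]
  have hi := i.isLt
  have hj := j.isLt
  constructor
  · rintro (h | h) <;> omega
  · intro h; omega

/-! ### minimal walks -/

lemma min_walk {t u : V} {P : V → Prop}
    (hne : ∃ p : G.Walk t u, ∀ x ∈ p.support, P x) :
    ∃ p : G.Walk t u, (∀ x ∈ p.support, P x) ∧ p.IsPath ∧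
      ∀ q : G.Walk t u, (∀ x ∈ q.support, P x) → p.length ≤ q.length := by
  classical
  have hex : ∃ n, ∃ p : G.Walk t u, (∀ x ∈ p.support, P x) ∧ p.length = n := by
    obtain ⟨p, hp⟩ := hne; exact ⟨p.length, p, hp, rfl⟩
  obtain ⟨p, hp, hlen⟩ := Nat.find_spec hex
  have hmin : ∀ q : G.Walk t u, (∀ x ∈ q.support, P x) → Nat.find hex ≤ q.length := by
    intro q hq
    by_contra hlt
    exact Nat.find_min hex (by omega) ⟨q, hq, rfl⟩
  have hbp : ∀ x ∈ p.bypass.support, P x := fun x hx => hp x (p.support_bypass_subset hx)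
  refine ⟨p.bypass, hbp, p.bypass_isPath, ?_⟩
  intro q hq
  calc p.bypass.length ≤ p.length := p.length_bypass_le
    _ = Nat.find hex := hlen
    _ ≤ q.length := hmin q hq

lemma path_facts {t u : V} {A : Finset V} (htA : t ∉ A) (huA : u ∉ A)
    {p : G.Walk t u} (hp : ∀ x ∈ p.support, x = t ∨ x = u ∨ x ∈ A) (hpath : p.IsPath)
    (hmin : ∀ q : G.Walk t u, (∀ x ∈ q.support, x = t ∨ x = u ∨ x ∈ A) →
      p.length ≤ q.length) :
    (∀ r, 0 < r → r < p.length → p.getVert r ∈ A) ∧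
    (∀ r r', r < r' → r' ≤ p.length → G.Adj (p.getVert r) (p.getVert r') → r' = r + 1) := by
  constructor
  · intro r hr0 hrk
    rcases hp _ (getVert_mem_support p (le_of_lt hrk)) with h | h | h
    · exfalso
      have : r = 0 := getVert_inj hpath (le_of_lt hrk) (Nat.zero_le _)
        (by rw [h, p.getVert_zero])
      omega
    · exfalso
      have : r = p.length := getVert_inj hpath (le_of_lt hrk) le_rfl
        (by rw [h, p.getVert_length])
      omega
    · exact h
  · intro r r' hrr hr'k hadj
    by_contra hne
    have h1 : r + 1 < r' := by omega
    obtain ⟨q, hql, hqs⟩ := surgery p r r' h1 hr'k hadj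
    have : p.length ≤ q.length := hmin q (fun x hx => hp x (hqs x hx))
    omega

lemma chordal_no_cycle {s : Finset V} (hch : ChordalIn G s) {A B : Finset V}
    (hAs : ∀ x ∈ A, x ∈ s) (hBs : ∀ x ∈ B, x ∈ s)
    (hABadj : ∀ x ∈ A, ∀ y ∈ B, ¬ G.Adj x y) (hABdisj : ∀ x ∈ A, x ∉ B)
    {t u : V} (hts : t ∈ s) (hus : u ∈ s) (htu : t ≠ u) (hnadj : ¬ G.Adj t u)
    (htA : t ∉ A) (htB : t ∉ B) (huA : u ∉ A) (huB : u ∉ B)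
    (hWA : ∃ p : G.Walk t u, ∀ x ∈ p.support, x = t ∨ x = u ∨ x ∈ A)
    (hWB : ∃ p : G.Walk t u, ∀ x ∈ p.support, x = t ∨ x = u ∨ x ∈ B) : False := by
  classical
  obtain ⟨p, hpP, hppath, hpmin⟩ := min_walk hWA
  obtain ⟨q, hqP, hqpath, hqmin⟩ := min_walk hWB
  obtain ⟨hpint, hpchord⟩ := path_facts htA huA hpP hppath hpmin
  obtain ⟨hqint, hqchord⟩ := path_facts htB huB hqP hqpath hqmin
  have hk2 : 2 ≤ p.length := by
    by_contra h
    rcases (by omega : p.length = 0 ∨ p.length = 1) with h0 | h1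
    · exact htu (Walk.eq_of_length_eq_zero h0)
    · have h2 := p.adj_getVert_succ (by omega : 0 < p.length)
      rw [p.getVert_zero] at h2
      have h3 : p.getVert 1 = u := by rw [← h1]; exact p.getVert_length
      rw [h3] at h2; exact hnadj h2
  have hm2 : 2 ≤ q.length := by
    by_contra h
    rcases (by omega : q.length = 0 ∨ q.length = 1) with h0 | h1
    · exact htu (Walk.eq_of_length_eq_zero h0)
    · have h2 := q.adj_getVert_succ (by omega : 0 < q.length)
      rw [q.getVert_zero] at h2
      have h3 : q.getVert 1 = u := by rw [← h1]; exact q.getVert_length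
      rw [h3] at h2; exact hnadj h2
  set k := p.length with hk
  set m := q.length with hm
  have hn4 : 4 ≤ k + m := by omega
  have hpk : p.getVert k = u := by rw [hk]; exact p.getVert_length
  have hqm : q.getVert m = u := by rw [hm]; exact q.getVert_length
  have hinjA : ∀ i j : ℕ, i ≤ k → j ≤ k → p.getVert i = p.getVert j → i = j :=
    fun i j hi hj h => getVert_inj hppath (by omega) (by omega) h
  have hinjB : ∀ i j : ℕ, i ≤ m → j ≤ m → q.getVert i = q.getVert j → i = j :=
    fun i j hi hj h => getVert_inj hqpath (by omega) (by omega) h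
  have hclassA : ∀ i : ℕ, i ≤ k →
      (p.getVert i = t ∨ p.getVert i = u ∨ p.getVert i ∈ A) :=
    fun i h => hpP _ (getVert_mem_support p (by omega))
  have hclassB : ∀ i : ℕ, i ≤ m →
      (q.getVert i = t ∨ q.getVert i = u ∨ q.getVert i ∈ B) :=
    fun i h => hqP _ (getVert_mem_support q (by omega))
  set F : Fin (k+m) → V := fun i => if (i:ℕ) ≤ k then p.getVert i
    else q.getVert (k + m - (i:ℕ)) with hF
  have hFle : ∀ i : Fin (k+m), (i:ℕ) ≤ k → F i = p.getVert i := by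
    intro i h; simp only [hF]; rw [if_pos h]
  have hFgt : ∀ i : Fin (k+m), k < (i:ℕ) → F i = q.getVert (k + m - (i:ℕ)) := by
    intro i h; simp only [hF]; rw [if_neg (by omega)]
  have hFs : ∀ i : Fin (k+m), F i ∈ s := by
    intro i
    have hi := i.isLt
    by_cases hik : (i:ℕ) ≤ k
    · rw [hFle i hik]
      rcases hclassA i hik with h | h | h
      · rw [h]; exact hts
      · rw [h]; exact hus
      · exact hAs _ h
    · rw [hFgt i (by omega)]
      rcases hclassB (k + m - (i:ℕ)) (by omega) with h | h | h
      · rw [h]; exact hts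
      · rw [h]; exact hus
      · exact hBs _ h
  have hFinj : Function.Injective F := by
    intro i j hij
    have hi := i.isLt
    have hj := j.isLt
    apply Fin.ext
    by_cases hik : (i:ℕ) ≤ k <;> by_cases hjk : (j:ℕ) ≤ k
    · rw [hFle i hik, hFle j hjk] at hij
      exact hinjA _ _ hik hjk hij
    · exfalso
      have hjB : q.getVert (k + m - (j:ℕ)) ∈ B := hqint _ (by omega) (by omega)
      rw [hFle i hik, hFgt j (by omega)] at hij
      rw [← hij] at hjB
      rcases hclassA i hik with h | h | h
      · rw [h] at hjB; exact htB hjB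
      · rw [h] at hjB; exact huB hjB
      · exact hABdisj _ h hjB
    · exfalso
      have hiB : q.getVert (k + m - (i:ℕ)) ∈ B := hqint _ (by omega) (by omega)
      rw [hFgt i (by omega), hFle j hjk] at hij
      rw [hij] at hiB
      rcases hclassA j hjk with h | h | h
      · rw [h] at hiB; exact htB hiB
      · rw [h] at hiB; exact huB hiB
      · exact hABdisj _ h hiB
    · rw [hFgt i (by omega), hFgt j (by omega)] at hij
      have := hinjB _ _ (by omega) (by omega) hij
      omega
  have hstep : ∀ i j : Fin (k+m), (j:ℕ) = (i:ℕ) + 1 → G.Adj (F i) (F j) := by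
    intro i j hji
    have hi := i.isLt
    have hj := j.isLt
    by_cases hjk : (j:ℕ) ≤ k
    · rw [hFle i (by omega), hFle j hjk, hji]
      exact p.adj_getVert_succ (by omega)
    · by_cases hik : (i:ℕ) ≤ k
      · have hik' : (i:ℕ) = k := by omega
        rw [hFle i hik, hFgt j (by omega)]
        have h1 : k + m - (j:ℕ) = m - 1 := by omega
        have h2 : p.getVert (i:ℕ) = q.getVert m := by rw [hik', hpk, hqm]
        rw [h1, h2]
        have h4 := q.adj_getVert_succ (i := m - 1) (by omega)
        have h3 : m - 1 + 1 = m := by omega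
        rw [h3] at h4
        exact h4.symm
      · rw [hFgt i (by omega), hFgt j (by omega)]
        have h4 := q.adj_getVert_succ (i := k + m - (j:ℕ)) (by omega)
        have h3 : k + m - (j:ℕ) + 1 = k + m - (i:ℕ) := by omega
        rw [h3] at h4
        exact h4.symm
  have hwrap : ∀ i j : Fin (k+m), (i:ℕ) = 0 → (j:ℕ) = k + m - 1 → G.Adj (F i) (F j) := by
    intro i j hi0 hjn
    rw [hFle i (by omega), hFgt j (by omega)]
    have h1 : p.getVert (i:ℕ) = q.getVert 0 := by rw [hi0, p.getVert_zero, q.getVert_zero]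
    have h2 : k + m - (j:ℕ) = 1 := by omega
    rw [h1, h2]
    exact q.adj_getVert_succ (by omega)
  have hback : ∀ i j : Fin (k+m), (i:ℕ) ≤ (j:ℕ) → G.Adj (F i) (F j) →
      ((j:ℕ) = (i:ℕ) + 1 ∨ (i:ℕ) = (j:ℕ) + 1 ∨
        ((i:ℕ) = 0 ∧ (j:ℕ) = k + m - 1) ∨ ((j:ℕ) = 0 ∧ (i:ℕ) = k + m - 1)) := by
    intro i j hij hadj
    have hi := i.isLt
    have hj := j.isLt
    by_cases hjk : (j:ℕ) ≤ k
    · have hik : (i:ℕ) ≤ k := by omega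
      rw [hFle i hik, hFle j hjk] at hadj
      have hne : (i:ℕ) ≠ (j:ℕ) := by
        intro h
        rw [h] at hadj
        exact G.loopless.irrefl _ hadj
      have := hpchord (i:ℕ) (j:ℕ) (by omega) hjk hadj
      omega
    · by_cases hik : (i:ℕ) ≤ k
      · rw [hFle i hik, hFgt j (by omega)] at hadj
        have hjB : q.getVert (k + m - (j:ℕ)) ∈ B := hqint _ (by omega) (by omega)
        rcases hclassA (i:ℕ) hik with h | h | h
        · have hadj' : G.Adj (q.getVert 0) (q.getVert (k + m - (j:ℕ))) := by
            rw [show q.getVert 0 = p.getVert (i:ℕ) from by rw [q.getVert_zero, h]]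
            exact hadj
          have hc := hqchord 0 (k + m - (j:ℕ)) (by omega) (by omega) hadj'
          have hi0 : (i:ℕ) = 0 := hinjA _ 0 hik (by omega) (by rw [h, p.getVert_zero])
          right; right; left
          exact ⟨hi0, by omega⟩
        · have hadj' : G.Adj (q.getVert m) (q.getVert (k + m - (j:ℕ))) := by
            rw [show q.getVert m = p.getVert (i:ℕ) from by rw [hqm, h]]
            exact hadj
          have hc := hqchord (k + m - (j:ℕ)) m (by omega) le_rfl hadj'.symm
          have hik' : (i:ℕ) = k := hinjA _ k hik le_rfl (by rw [h, hpk])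
          left; omega
        · exact absurd hadj (hABadj _ h _ hjB)
      · rw [hFgt i (by omega), hFgt j (by omega)] at hadj
        rcases Nat.lt_trichotomy (k + m - (i:ℕ)) (k + m - (j:ℕ)) with hlt | heq | hgt
        · omega
        · exfalso
          have hij' : (i:ℕ) = (j:ℕ) := by omega
          rw [hij'] at hadj
          exact G.loopless.irrefl _ hadj
        · have hc := hqchord (k + m - (j:ℕ)) (k + m - (i:ℕ)) hgt (by omega) hadj.symm
          left; omega
  refine hch (k + m) hn4 ⟨⟨F, hFinj⟩, hFs, ?_⟩
  intro i j
  rw [cyc_adj (by omega : 2 ≤ k + m)]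
  constructor
  · rintro (h | h | ⟨h1, h2⟩ | ⟨h1, h2⟩)
    · exact hstep i j h
    · exact (hstep j i h).symm
    · exact hwrap i j h1 h2
    · exact (hwrap j i h1 h2).symm
  · intro hadj
    rcases le_total (i:ℕ) (j:ℕ) with h | h
    · exact hback i j h hadj
    · have := hback j i h hadj.symm
      tauto

/-! ### Dirac's theorem (relativized) -/

lemma no_walk_pair {a b : V} (hne : a ≠ b) (hnadj : ¬ G.Adj a b) (p : G.Walk a b)
    (hp : ∀ x ∈ p.support, x = a ∨ x = b) : False := by
  cases p with
  | nil => exact hne rfl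
  | cons h p' =>
      rename_i x
      have hx : x ∈ (Walk.cons h p').support := by
        rw [Walk.support_cons]; exact List.mem_cons_of_mem _ p'.start_mem_support
      rcases hp x hx with rfl | rfl
      · exact G.loopless.irrefl _ h
      · exact hnadj h

lemma nbr {s T : Finset V} {a b t : V} (haT : a ∉ T) (hat : a ≠ t)
    (hsep : ¬ RIn G (s \ T) a b) (hr : RIn G (s \ T.erase t) a b) :
    ∃ x, x ∈ s \ T ∧ RIn G (s \ T) a x ∧ G.Adj t x := by
  obtain ⟨p, hp⟩ := hr
  have htp : t ∈ p.support := by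
    by_contra ht
    apply hsep
    refine ⟨p, fun x hx => ?_⟩
    have hxm := Finset.mem_sdiff.1 (hp x hx)
    rw [Finset.mem_sdiff]
    exact ⟨hxm.1, fun hxT =>
      hxm.2 (Finset.mem_erase.2 ⟨fun hxt => ht (hxt ▸ hx), hxT⟩)⟩
  set p1 := p.takeUntil t htp with hp1
  have hp1supp : ∀ x ∈ p1.support, x ∈ s \ T.erase t :=
    fun x hx => hp x (Walk.support_takeUntil_subset _ _ hx)
  have hcount : p1.support.count t = 1 := p.count_support_takeUntil_eq_one htp
  set r := p1.reverse with hrev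
  have hrnil : ¬ r.Nil := Walk.not_nil_of_ne (fun h => hat h.symm)
  set x := r.getVert 1 with hx
  have hadj : G.Adj t x := r.adj_snd hrnil
  have hrsupp : r.support = t :: r.tail.support := (Walk.cons_support_tail hrnil).symm
  have hrsub : ∀ z ∈ r.support, z ∈ s \ T.erase t := by
    intro z hz
    rw [hrev, Walk.support_reverse, List.mem_reverse] at hz
    exact hp1supp z hz
  have htnotin : t ∉ r.tail.support := by
    have hc : r.support.count t = 1 := by
      rw [hrev, Walk.support_reverse, List.count_reverse]
      exact hcount
    rw [hrsupp] at hc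
    simp only [List.count_cons_self] at hc
    intro hmem
    have := List.count_pos_iff.2 hmem
    omega
  have hsub2 : ∀ z ∈ r.tail.support, z ∈ s \ T := by
    intro z hz
    have hzm := Finset.mem_sdiff.1 (hrsub z (by rw [hrsupp]; exact List.mem_cons_of_mem _ hz))
    rw [Finset.mem_sdiff]
    refine ⟨hzm.1, fun hzT => hzm.2 (Finset.mem_erase.2 ⟨fun hzt => htnotin (hzt ▸ hz), hzT⟩)⟩
  have hxmem : x ∈ s \ T := hsub2 x r.tail.start_mem_support
  have hRxa : RIn G (s \ T) x a := ⟨r.tail, hsub2⟩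
  exact ⟨x, hxmem, hRxa.symm, hadj⟩

theorem dirac (s : Finset V) : ChordalIn G s →
    CompleteIn G s ∨ ∃ x ∈ s, ∃ y ∈ s, x ≠ y ∧ ¬ G.Adj x y ∧ SimpIn G s x ∧ SimpIn G s y := by
  induction s using Finset.strongInduction with
  | _ s ih =>
  intro hch
  by_cases hcomp : CompleteIn G s
  · exact Or.inl hcomp
  right
  rw [CompleteIn] at hcomp
  push_neg at hcomp
  obtain ⟨a, ha, b, hb, hne, hnadj⟩ := hcomp
  have hfam : ¬ RIn G (s \ (s \ {a, b})) a b := by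
    rintro ⟨p, hp⟩
    refine no_walk_pair hne hnadj p (fun x hx => ?_)
    have := Finset.mem_sdiff.1 (hp x hx)
    have h2 := this.2
    rw [Finset.mem_sdiff] at h2
    push_neg at h2
    have := h2 this.1
    simpa using this
  obtain ⟨T, hTmem, hTmin⟩ := Finset.exists_min_image
    ((s \ {a, b}).powerset.filter (fun T => ¬ RIn G (s \ T) a b)) Finset.card
    ⟨s \ {a, b}, by
      rw [Finset.mem_filter, Finset.mem_powerset]
      exact ⟨le_rfl, hfam⟩⟩
  rw [Finset.mem_filter, Finset.mem_powerset] at hTmem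
  obtain ⟨hTsub, hTsep⟩ := hTmem
  have haT : a ∉ T := fun h => (Finset.mem_sdiff.1 (hTsub h)).2 (by simp)
  have hbT : b ∉ T := fun h => (Finset.mem_sdiff.1 (hTsub h)).2 (by simp)
  have hTs : T ⊆ s := hTsub.trans (Finset.sdiff_subset)
  have hmin : ∀ t ∈ T, RIn G (s \ T.erase t) a b := by
    intro t ht
    by_contra h
    have hmem : T.erase t ∈ (s \ {a, b}).powerset.filter (fun T => ¬ RIn G (s \ T) a b) := by
      rw [Finset.mem_filter, Finset.mem_powerset]
      exact ⟨(Finset.erase_subset _ _).trans hTsub, h⟩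
    have := hTmin _ hmem
    have := Finset.card_erase_lt_of_mem ht
    omega
  -- T is a clique
  have hclT : ∀ t ∈ T, ∀ u ∈ T, t ≠ u → G.Adj t u := by
    intro t ht u hu htu
    by_contra hnadj'
    have hat : a ≠ t := fun h => haT (h ▸ ht)
    have hau : a ≠ u := fun h => haT (h ▸ hu)
    have hbt : b ≠ t := fun h => hbT (h ▸ ht)
    have hbu : b ≠ u := fun h => hbT (h ▸ hu)
    have hsepb : ¬ RIn G (s \ T) b a := fun h => hTsep h.symm
    obtain ⟨xt, hxt, hxtR, hxtadj⟩ := nbr haT hat hTsep (hmin t ht)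
    obtain ⟨xu, hxu, hxuR, hxuadj⟩ := nbr haT hau hTsep (hmin u hu)
    obtain ⟨yt, hyt, hytR, hytadj⟩ := nbr hbT hbt hsepb ((hmin t ht).symm)
    obtain ⟨yu, hyu, hyuR, hyuadj⟩ := nbr hbT hbu hsepb ((hmin u hu).symm)
    set A := (s \ T).filter (fun x => RIn G (s \ T) a x) with hA
    set B := (s \ T).filter (fun x => RIn G (s \ T) b x) with hB
    have hAmem : ∀ x, x ∈ A ↔ (x ∈ s \ T ∧ RIn G (s \ T) a x) := by
      intro x; rw [hA, Finset.mem_filter]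
    have hBmem : ∀ x, x ∈ B ↔ (x ∈ s \ T ∧ RIn G (s \ T) b x) := by
      intro x; rw [hB, Finset.mem_filter]
    have hABadj : ∀ x ∈ A, ∀ y ∈ B, ¬ G.Adj x y := by
      intro x hx y hy hadj
      have hxm := (hAmem x).1 hx
      have hym := (hBmem y).1 hy
      exact hTsep ((hxm.2.adj_extend hadj hym.1).trans hym.2.symm)
    have hABdisj : ∀ x ∈ A, x ∉ B := by
      intro x hx hxB
      exact hTsep (((hAmem x).1 hx).2.trans (((hBmem x).1 hxB).2).symm)
    have hWA : ∃ p : G.Walk t u, ∀ x ∈ p.support, x = t ∨ x = u ∨ x ∈ A := by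
      obtain ⟨r, hr⟩ := hxtR.symm.trans hxuR
      refine ⟨Walk.cons hxtadj (r.append (Walk.cons hxuadj.symm Walk.nil)), ?_⟩
      intro x hx
      rw [Walk.support_cons] at hx
      rcases List.mem_cons.1 hx with rfl | hx
      · exact Or.inl rfl
      rw [Walk.mem_support_append_iff] at hx
      rcases hx with hx | hx
      · refine Or.inr (Or.inr ?_)
        rw [hAmem]
        exact ⟨hr x hx, hxtR.trans (RIn.support_reach r hr hx)⟩
      · simp only [Walk.support_cons, Walk.support_nil, List.mem_cons,
          List.mem_singleton] at hx
        rcases hx with rfl | rfl | hfalse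
        · refine Or.inr (Or.inr ?_)
          rw [hAmem]
          exact ⟨hxu, hxuR⟩
        · exact Or.inr (Or.inl rfl)
        · simp at hfalse
    have hWB : ∃ p : G.Walk t u, ∀ x ∈ p.support, x = t ∨ x = u ∨ x ∈ B := by
      obtain ⟨r, hr⟩ := hytR.symm.trans hyuR
      refine ⟨Walk.cons hytadj (r.append (Walk.cons hyuadj.symm Walk.nil)), ?_⟩
      intro x hx
      rw [Walk.support_cons] at hx
      rcases List.mem_cons.1 hx with rfl | hx
      · exact Or.inl rfl
      rw [Walk.mem_support_append_iff] at hx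
      rcases hx with hx | hx
      · refine Or.inr (Or.inr ?_)
        rw [hBmem]
        exact ⟨hr x hx, hytR.trans (RIn.support_reach r hr hx)⟩
      · simp only [Walk.support_cons, Walk.support_nil, List.mem_cons,
          List.mem_singleton] at hx
        rcases hx with rfl | rfl | hfalse
        · refine Or.inr (Or.inr ?_)
          rw [hBmem]
          exact ⟨hyu, hyuR⟩
        · exact Or.inr (Or.inl rfl)
        · simp at hfalse
    refine chordal_no_cycle hch
      (fun x hx => (Finset.mem_sdiff.1 ((hAmem x).1 hx).1).1)
      (fun x hx => (Finset.mem_sdiff.1 ((hBmem x).1 hx).1).1)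
      hABadj hABdisj (hTs ht) (hTs hu) htu hnadj' ?_ ?_ ?_ ?_ hWA hWB
    · intro h; exact (Finset.mem_sdiff.1 ((hAmem t).1 h).1).2 ht
    · intro h; exact (Finset.mem_sdiff.1 ((hBmem t).1 h).1).2 ht
    · intro h; exact (Finset.mem_sdiff.1 ((hAmem u).1 h).1).2 hu
    · intro h; exact (Finset.mem_sdiff.1 ((hBmem u).1 h).1).2 hu
  -- side simplicial vertices
  have hsideSimp : ∀ c d : V, c ∈ s → c ∉ T → d ∈ s → d ∉ T → ¬ RIn G (s \ T) c d →
      ∃ z, (z ∈ s \ T ∧ RIn G (s \ T) c z) ∧ SimpIn G s z := by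
    intro c d hc hcT hd hdT hcd
    set C := (s \ T).filter (fun x => RIn G (s \ T) c x) with hC
    have hCmem : ∀ x, x ∈ C ↔ (x ∈ s \ T ∧ RIn G (s \ T) c x) := by
      intro x; rw [hC, Finset.mem_filter]
    have hCc : c ∈ C := (hCmem c).2 ⟨Finset.mem_sdiff.2 ⟨hc, hcT⟩, RIn.refl (Finset.mem_sdiff.2 ⟨hc, hcT⟩)⟩
    set sC := C ∪ T with hsC
    have hsub : sC ⊆ s := by
      intro x hx
      rcases Finset.mem_union.1 hx with hx | hx
      · exact (Finset.mem_sdiff.1 ((hCmem x).1 hx).1).1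
      · exact hTs hx
    have hdsC : d ∉ sC := by
      intro hmem
      rcases Finset.mem_union.1 hmem with hmem | hmem
      · exact hcd ((hCmem d).1 hmem).2
      · exact hdT hmem
    have hss : sC ⊂ s := Finset.ssubset_iff_of_subset hsub |>.2 ⟨d, hd, hdsC⟩
    have hNS : ∀ z ∈ C, ∀ y ∈ s, G.Adj z y → y ∈ sC := by
      intro z hz y hy hadj
      by_cases hyT : y ∈ T
      · exact Finset.mem_union_right _ hyT
      · refine Finset.mem_union_left _ ((hCmem y).2 ⟨Finset.mem_sdiff.2 ⟨hy, hyT⟩, ?_⟩)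
        exact ((hCmem z).1 hz).2.adj_extend hadj (Finset.mem_sdiff.2 ⟨hy, hyT⟩)
    have hlift : ∀ z ∈ C, SimpIn G sC z → SimpIn G s z := by
      intro z hz hsimp p hp q hq hpq
      rw [NS, Finset.mem_filter] at hp hq
      refine hsimp p ?_ q ?_ hpq
      · rw [NS, Finset.mem_filter]
        exact ⟨hNS z hz p hp.1 hp.2, hp.2⟩
      · rw [NS, Finset.mem_filter]
        exact ⟨hNS z hz q hq.1 hq.2, hq.2⟩
    rcases ih sC hss (chordalIn_mono hsub hch) with hcompC | ⟨x, hx, y, hy, hxy, hxyn, hxs, hys⟩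
    · refine ⟨c, (hCmem c).1 hCc, hlift c hCc ?_⟩
      intro p hp q hq hpq
      rw [NS, Finset.mem_filter] at hp hq
      exact hcompC p hp.1 q hq.1 hpq
    · have hone : x ∈ C ∨ y ∈ C := by
        by_contra hcon
        push_neg at hcon
        have hxT : x ∈ T := (Finset.mem_union.1 hx).resolve_left hcon.1
        have hyT : y ∈ T := (Finset.mem_union.1 hy).resolve_left hcon.2
        exact hxyn (hclT x hxT y hyT hxy)
      rcases hone with hzC | hzC
      · exact ⟨x, (hCmem x).1 hzC, hlift x hzC hxs⟩
      · exact ⟨y, (hCmem y).1 hzC, hlift y hzC hys⟩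
  obtain ⟨zA, ⟨hzAm, hzAr⟩, hzAsimp⟩ := hsideSimp a b ha haT hb hbT hTsep
  obtain ⟨zB, ⟨hzBm, hzBr⟩, hzBsimp⟩ := hsideSimp b a hb hbT ha haT (fun h => hTsep h.symm)
  refine ⟨zA, (Finset.mem_sdiff.1 hzAm).1, zB, (Finset.mem_sdiff.1 hzBm).1, ?_, ?_,
    hzAsimp, hzBsimp⟩
  · intro h
    exact hTsep (hzAr.trans (h ▸ hzBr.symm))
  · intro hadj
    exact hTsep ((hzAr.adj_extend hadj hzBm).trans hzBr.symm)

lemma exists_simplicial {s : Finset V} (hch : ChordalIn G s) (hne : s.Nonempty) :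
    ∃ v ∈ s, SimpIn G s v := by
  rcases dirac s hch with hcomp | ⟨x, hx, _, _, _, _, hxs, _⟩
  · obtain ⟨v, hv⟩ := hne
    refine ⟨v, hv, ?_⟩
    intro p hp q hq hpq
    rw [NS, Finset.mem_filter] at hp hq
    exact hcomp p hp.1 q hq.1 hpq
  · exact ⟨x, hx, hxs⟩

/-! ### connectivity of cliques containing a common subclique -/

/-- one step of the clique chain -/
def Step (G : SimpleGraph V) (s S : Finset V) (A B : Finset V) : Prop :=
  AdjIn G s A B ∧ MaxCliqueIn G s A ∧ MaxCliqueIn G s B ∧ S ⊆ A ∧ S ⊆ B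

theorem conn (s : Finset V) : ChordalIn G s → ∀ S K L : Finset V,
    MaxCliqueIn G s K → MaxCliqueIn G s L → S ⊆ K → S ⊆ L →
    Relation.ReflTransGen (Step G s S) K L := by
  induction s using Finset.strongInduction with
  | _ s ih =>
  intro hch S K L hK hL hSK hSL
  by_cases hKL : K = L
  · exact hKL ▸ Relation.ReflTransGen.refl
  have hsne : s.Nonempty := by
    rcases Finset.eq_empty_or_nonempty s with rfl | h
    · exact absurd ((Finset.subset_empty.1 hK.1.1).trans
        (Finset.subset_empty.1 hL.1.1).symm) hKL
    · exact h
  obtain ⟨v, hvs, hv⟩ := exists_simplicial hch hsne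
  set Kv := insert v (NS G s v) with hKv
  have hKvmax : MaxCliqueIn G s Kv := maxclique_insert_NS hvs hv
  by_cases hvS : v ∈ S
  · -- then K = Kv = L
    exfalso
    apply hKL
    rw [maxclique_mem_v hvs hv hK (hSK hvS), maxclique_mem_v hvs hv hL (hSL hvS)]
  -- v ∉ S
  set s' := s.erase v with hs'
  have hss' : s' ⊂ s := Finset.erase_ssubset hvs
  have hch' : ChordalIn G s' := chordalIn_mono (Finset.erase_subset _ _) hch
  have hNvcl : CliqueIn G s' (NS G s v) := ⟨NS_subset_erase, NS_clique hv⟩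
  obtain ⟨M₀, hM₀, hNvM₀⟩ := exists_maxclique hNvcl
  -- the images
  have hproj : ∀ P : Finset V, MaxCliqueIn G s P → S ⊆ P →
      ∃ P', MaxCliqueIn G s' P' ∧ S ⊆ P' ∧ (P' = P ∨ (P = Kv ∧ P' = M₀)) := by
    intro P hP hSP
    by_cases hvP : v ∈ P
    · have hPKv : P = Kv := maxclique_mem_v hvs hv hP hvP
      refine ⟨M₀, hM₀, ?_, Or.inr ⟨hPKv, rfl⟩⟩
      refine subset_trans ?_ hNvM₀
      intro x hx
      have : x ∈ Kv := hPKv ▸ hSP hx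
      rcases Finset.mem_insert.1 this with rfl | h
      · exact absurd hx hvS
      · exact h
    · exact ⟨P, maxclique_erase_of_not_mem hP hvP, hSP, Or.inl rfl⟩
  obtain ⟨K', hK', hSK', hKalt⟩ := hproj K hK hSK
  obtain ⟨L', hL', hSL', hLalt⟩ := hproj L hL hSL
  have hchain' := ih s' hss' hch' S K' L' hK' hL' hSK' hSL'
  -- mapping function
  have hNvne : NS G s v ≠ Kv := by
    intro h
    have : v ∈ NS G s v := h ▸ Finset.mem_insert_self v _
    exact (Finset.mem_erase.1 (NS_subset_erase this)).1 rfl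
  have hNvnotmax : ∀ P, MaxCliqueIn G s P → P ≠ NS G s v := by
    intro P hP h
    subst h
    exact hNvne (hP.2 Kv hKvmax.1 (Finset.subset_insert _ _))
  have hmaxlift : ∀ P, MaxCliqueIn G s' P → P ≠ NS G s v → MaxCliqueIn G s P := by
    intro P hP hPNv
    refine maxclique_lift hvs hv hP ?_
    intro hPN
    exact hPNv (hP.2 _ hNvcl hPN)
  -- map a step
  have hmapstep : ∀ P Q, Step G s' S P Q →
      Step G s S (if P = NS G s v then Kv else P) (if Q = NS G s v then Kv else Q) := by
    intro P Q hstep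
    obtain ⟨hadj, hPmax, hQmax, hSP, hSQ⟩ := hstep
    by_cases hP : P = NS G s v <;> by_cases hQ : Q = NS G s v
    · exact absurd (hP.trans hQ.symm) hadj.1
    · rw [if_pos hP, if_neg hQ]
      subst hP
      refine ⟨relabel hvs hv hQmax.1.1 hQmax.1.2 hadj, hKvmax, hmaxlift Q hQmax hQ, ?_, hSQ⟩
      exact subset_trans hSP (Finset.subset_insert _ _)
    · rw [if_neg hP, if_pos hQ]
      subst hQ
      refine ⟨adjIn_symm (relabel hvs hv hPmax.1.1 hPmax.1.2 (adjIn_symm hadj)),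
        hmaxlift P hPmax hP, hKvmax, hSP, subset_trans hSQ (Finset.subset_insert _ _)⟩
    · rw [if_neg hP, if_neg hQ]
      exact ⟨persist hvs hv hPmax.1.1 hQmax.1.1 hadj,
        hmaxlift P hPmax hP, hmaxlift Q hQmax hQ, hSP, hSQ⟩
  -- mapped chain
  have hmapped : ∀ P Q : Finset V, Relation.ReflTransGen (Step G s' S) P Q →
      Relation.ReflTransGen (Step G s S)
        (if P = NS G s v then Kv else P) (if Q = NS G s v then Kv else Q) := by
    intro P Q h
    induction h with
    | refl => exact Relation.ReflTransGen.refl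
    | tail hc hstep ihc => exact Relation.ReflTransGen.tail ihc (hmapstep _ _ hstep)
  -- bridge at K
  have hbridgeK : Relation.ReflTransGen (Step G s S) K (if K' = NS G s v then Kv else K') := by
    rcases hKalt with h1 | ⟨hKKv, h2⟩
    · rw [h1, if_neg (hNvnotmax K hK)]
    · rw [h2]
      by_cases hM₀Nv : M₀ = NS G s v
      · rw [if_pos hM₀Nv, hKKv]
      · rw [if_neg hM₀Nv]
        refine Relation.ReflTransGen.single ?_
        have hM₀max : MaxCliqueIn G s M₀ := hmaxlift M₀ hM₀ hM₀Nv
        refine ⟨?_, hK, hM₀max, hSK, h2 ▸ hSK'⟩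
        rw [hKKv]
        exact newedge hvs hv hM₀.1.1 hM₀.1.2 hNvM₀
  have hbridgeL : Relation.ReflTransGen (Step G s S) (if L' = NS G s v then Kv else L') L := by
    rcases hLalt with h1 | ⟨hLKv, h2⟩
    · rw [h1, if_neg (hNvnotmax L hL)]
    · rw [h2]
      by_cases hM₀Nv : M₀ = NS G s v
      · rw [if_pos hM₀Nv, hLKv]
      · rw [if_neg hM₀Nv]
        refine Relation.ReflTransGen.single ?_
        have hM₀max : MaxCliqueIn G s M₀ := hmaxlift M₀ hM₀ hM₀Nv
        refine ⟨?_, hM₀max, hL, h2 ▸ hSL', hSL⟩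
        rw [hLKv]
        exact adjIn_symm (newedge hvs hv hM₀.1.1 hM₀.1.2 hNvM₀)
  exact (hbridgeK.trans (hmapped K' L' hchain')).trans hbridgeL


/-! ### glue to the ambient definitions -/

section Assembly

lemma sep_iff {T : Finset V} {u v : V} :
    Separates G T u v ↔ SepIn G Finset.univ T u v := by
  constructor
  · rintro ⟨h1, h2, h3⟩
    refine ⟨h1, h2, ?_⟩
    rintro ⟨p, hp⟩
    obtain ⟨x, hx, hxT⟩ := h3 p
    exact (Finset.mem_sdiff.1 (hp x hx)).2 hxT
  · rintro ⟨h1, h2, h3⟩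
    refine ⟨h1, h2, fun p => ?_⟩
    by_contra h
    push_neg at h
    exact h3 ⟨p, fun x hx => Finset.mem_sdiff.2 ⟨Finset.mem_univ x, h x hx⟩⟩

lemma minsep_iff {T : Finset V} {u v : V} :
    MinSeparates G T u v ↔ MinSepIn G Finset.univ T u v := by
  unfold MinSeparates MinSepIn
  simp only [sep_iff]

lemma cg_adj_iff {K K' : CV G} :
    (cliqueGraph G).Adj K K' ↔ AdjIn G Finset.univ K.1 K'.1 := by
  constructor
  · rintro ⟨h1, h2⟩
    exact ⟨fun h => h1 (Subtype.ext h), fun u hu v hv => minsep_iff.1 (h2 u hu v hv)⟩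
  · rintro ⟨h1, h2⟩
    exact ⟨fun h => h1 (congrArg Subtype.val h), fun u hu v hv => minsep_iff.2 (h2 u hu v hv)⟩

lemma chordalIn_univ (h : IsChordal G) : ChordalIn G Finset.univ :=
  fun n hn ⟨f, _, hf⟩ => h n hn ⟨f, hf⟩

lemma stmt8_core (hch : IsChordal G) {w : ℕ} (hw : IsMinEdgeWeight G w)
    {S : Finset V} (hScard : S.card = w)
    (K1 K1' : CV G) (hadj1 : (cliqueGraph G).Adj K1 K1') (hlab1 : K1.1 ∩ K1'.1 = S) :
    ∀ A B : LUnit G w, A ≠ B →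
    (∃ P : CV G, umk G w P = A ∧ S ⊆ P.1) → (∃ Q : CV G, umk G w Q = B ∧ S ⊆ Q.1) →
    (layerGraph G w).Adj A B ∧ CrossLabel G w A B S := by
  have hchU : ChordalIn G Finset.univ := chordalIn_univ hch
  have hadj1' : AdjIn G Finset.univ K1.1 K1'.1 := cg_adj_iff.1 hadj1
  -- every maximal clique has a vertex outside S
  have hres : ∀ M : CV G, ∃ x, x ∈ M.1 ∧ x ∉ S := by
    intro M
    by_contra h
    push_neg at h
    have hSK1 : S ⊆ K1.1 := hlab1 ▸ Finset.inter_subset_left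
    have hSK1' : S ⊆ K1'.1 := hlab1 ▸ Finset.inter_subset_right
    have hMK1 : M.1 = K1.1 := M.2.2 K1.1 K1.2.1 (fun z hz => hSK1 (h z hz))
    have hK1sub : K1.1 ⊆ K1'.1 := by
      rw [← hMK1]
      exact fun z hz => hSK1' (h z hz)
    exact hadj1'.1 (K1.2.2 K1'.1 K1'.2.1 hK1sub)
  -- within one maximal clique, vertices outside S reach each other avoiding S
  have hcl : ∀ (M : CV G) (x y : V), x ∈ M.1 → y ∈ M.1 → x ∉ S → y ∉ S →
      RIn G (Finset.univ \ S) x y := by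
    intro M x y hx hy hxS hyS
    by_cases hxy : x = y
    · exact hxy ▸ RIn.refl (Finset.mem_sdiff.2 ⟨Finset.mem_univ _, hxS⟩)
    · exact RIn.of_adj (clique_pair M.2.1 hx hy hxy)
        (Finset.mem_sdiff.2 ⟨Finset.mem_univ _, hxS⟩)
        (Finset.mem_sdiff.2 ⟨Finset.mem_univ _, hyS⟩)
  -- same unit implies residuals reach each other avoiding S
  have hA4 : ∀ (M N : CV G) (p : (unitGraph G w).Walk M N) (x : V), x ∈ M.1 → x ∉ S →
      ∀ y, y ∈ N.1 → y ∉ S → RIn G (Finset.univ \ S) x y := by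
    intro M N p
    induction p with
    | nil =>
        intro x hx hxS y hy hyS
        exact hcl _ x y hx hy hxS hyS
    | cons hadj q ihq =>
        rename_i Ma Pa Na
        intro x hx hxS y hy hyS
        have hwlt : w < (Ma.1 ∩ Pa.1).card :=
          lt_of_le_of_ne (hw.2 Ma Pa hadj.1) (Ne.symm hadj.2)
        have hnsub : ¬ (Ma.1 ∩ Pa.1 ⊆ S) := by
          intro hsub
          have := Finset.card_le_card hsub
          omega
        obtain ⟨z, hz, hzS⟩ := Finset.not_subset.1 hnsub
        have h1 := hcl Ma x z hx (Finset.mem_inter.1 hz).1 hxS hzS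
        exact h1.trans (ihq z (Finset.mem_inter.1 hz).2 hzS y hy hyS)
  have hA4' : ∀ M N : CV G, umk G w M = umk G w N → ∀ x, x ∈ M.1 → x ∉ S →
      ∀ y, y ∈ N.1 → y ∉ S → RIn G (Finset.univ \ S) x y := by
    intro M N hMN
    have hreach : (unitGraph G w).Reachable M N := ConnectedComponent.exact hMN
    obtain ⟨p⟩ := hreach
    exact hA4 M N p
  -- different sides: edge with label S
  have hA5 : ∀ P Q : CV G, S ⊆ P.1 → S ⊆ Q.1 →
      (∀ x, x ∈ P.1 → x ∉ S → ∀ y, y ∈ Q.1 → y ∉ S → ¬ RIn G (Finset.univ \ S) x y) →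
      (cliqueGraph G).Adj P Q ∧ P.1 ∩ Q.1 = S := by
    intro P Q hSP hSQ hfar
    obtain ⟨x0, hx0P, hx0S⟩ := hres P
    have hPQ : P.1 ≠ Q.1 := by
      intro h
      exact hfar x0 hx0P hx0S x0 (h ▸ hx0P) hx0S
        (RIn.refl (Finset.mem_sdiff.2 ⟨Finset.mem_univ _, hx0S⟩))
    have hinter : P.1 ∩ Q.1 = S := by
      apply Finset.Subset.antisymm
      · intro z hz
        by_contra hzS
        exact hfar z (Finset.mem_inter.1 hz).1 hzS z (Finset.mem_inter.1 hz).2 hzS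
          (RIn.refl (Finset.mem_sdiff.2 ⟨Finset.mem_univ _, hzS⟩))
      · exact Finset.subset_inter hSP hSQ
    refine ⟨?_, hinter⟩
    rw [cg_adj_iff]
    refine ⟨hPQ, ?_⟩
    intro u hu v hv
    have hum := Finset.mem_sdiff.1 hu
    have hvm := Finset.mem_sdiff.1 hv
    have huS : u ∉ S := fun h => hum.2 (hSQ h)
    have hvS : v ∉ S := fun h => hvm.2 (hSP h)
    rw [hinter]
    refine ⟨⟨huS, hvS, ?_⟩, ?_⟩
    · rintro ⟨p, hp⟩
      exact hfar u hum.1 huS v hvm.1 hvS ⟨p, hp⟩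
    · intro T' hT' hsep
      obtain ⟨z, hzS, hzT'⟩ := Finset.exists_of_ssubset hT'
      have huz : u ≠ z := fun h => huS (h ▸ hzS)
      have hzv : z ≠ v := fun h => hvS (h ▸ hzS)
      have ha1 : G.Adj u z := clique_pair P.2.1 hum.1 (hSP hzS) huz
      have ha2 : G.Adj z v := clique_pair Q.2.1 (hSQ hzS) hvm.1 hzv
      apply hsep.2.2
      refine ⟨Walk.cons ha1 (Walk.cons ha2 Walk.nil), ?_⟩
      intro zz hzz
      simp only [Walk.support_cons, Walk.support_nil, List.mem_cons,
        List.mem_singleton] at hzz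
      rcases hzz with rfl | rfl | rfl | hfalse
      · exact Finset.mem_sdiff.2 ⟨Finset.mem_univ _, hsep.1⟩
      · exact Finset.mem_sdiff.2 ⟨Finset.mem_univ _, hzT'⟩
      · exact Finset.mem_sdiff.2 ⟨Finset.mem_univ _, hsep.2.1⟩
      · simp at hfalse
  -- same side implies same unit (the hard direction)
  have hA6 : ∀ P Q : CV G, S ⊆ P.1 → S ⊆ Q.1 →
      ∀ x, x ∈ P.1 → x ∉ S → ∀ y, y ∈ Q.1 → y ∉ S → RIn G (Finset.univ \ S) x y →
      umk G w P = umk G w Q := by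
    intro P Q hSP hSQ x hxP hxS y hyQ hyS hxy
    classical
    set C := Finset.univ.filter (fun z => RIn G (Finset.univ \ S) x z) with hC
    have hCmem : ∀ z, z ∈ C ↔ RIn G (Finset.univ \ S) x z := by
      intro z; rw [hC, Finset.mem_filter]; simp
    have hCS : ∀ z ∈ C, z ∉ S :=
      fun z hz => (Finset.mem_sdiff.1 ((hCmem z).1 hz).mem_right).2
    have hxC : x ∈ C := (hCmem x).2 (RIn.refl (Finset.mem_sdiff.2 ⟨Finset.mem_univ _, hxS⟩))
    set s' := S ∪ C with hs'
    have hstay : ∀ u0 z : V, u0 ∈ C → RIn G (Finset.univ \ S) u0 z → z ∈ C :=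
      fun u0 z h0 hr => (hCmem z).2 (((hCmem u0).1 h0).trans hr)
    have hPs' : P.1 ⊆ s' := by
      intro z hz
      by_cases hzS : z ∈ S
      · exact Finset.mem_union_left _ hzS
      · exact Finset.mem_union_right _ ((hCmem z).2 (hcl P x z hxP hz hxS hzS))
    have hQs' : Q.1 ⊆ s' := by
      intro z hz
      by_cases hzS : z ∈ S
      · exact Finset.mem_union_left _ hzS
      · exact Finset.mem_union_right _ ((hCmem z).2 (hxy.trans (hcl Q y z hyQ hz hyS hzS)))
    have hmaxP : MaxCliqueIn G s' P.1 :=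
      ⟨⟨hPs', P.2.1⟩, fun K' hK' hsub => P.2.2 K' hK'.2 hsub⟩
    have hmaxQ : MaxCliqueIn G s' Q.1 :=
      ⟨⟨hQs', Q.2.1⟩, fun K' hK' hsub => Q.2.2 K' hK'.2 hsub⟩
    have hchain := conn s' (chordalIn_mono (Finset.subset_univ s') hchU) S P.1 Q.1
      hmaxP hmaxQ hSP hSQ
    -- lifting maximal cliques of s' containing S to global maximal cliques
    have hmaxlift : ∀ R : Finset V, MaxCliqueIn G s' R → S ⊆ R → MaxClique G R := by
      intro R hR hSR
      have hRC : ∃ c, c ∈ R ∧ c ∈ C := by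
        by_contra h
        push_neg at h
        have hRS : R ⊆ S := by
          intro c hc
          rcases Finset.mem_union.1 (hR.1.1 hc) with h' | h'
          · exact h'
          · exact absurd h' (h c hc)
        have hclx : CliqueIn G s' (insert x S) := by
          refine ⟨?_, ?_⟩
          · intro z hz
            rcases Finset.mem_insert.1 hz with rfl | hz
            · exact Finset.mem_union_right _ hxC
            · exact Finset.mem_union_left _ hz
          · rw [Finset.coe_insert]
            refine IsClique.insert (P.2.1.subset (by exact_mod_cast hSP)) ?_
            intro z hz hne
            exact clique_pair P.2.1 hxP (hSP (by exact_mod_cast hz)) hne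
        have hReq := hR.2 (insert x S) hclx (hRS.trans (Finset.subset_insert _ _))
        have hxR : x ∈ R := hReq ▸ Finset.mem_insert_self _ _
        exact h x hxR hxC
      obtain ⟨c, hcR, hcC⟩ := hRC
      refine ⟨hR.1.2, ?_⟩
      intro K' hK' hsub
      refine hR.2 K' ⟨?_, hK'⟩ hsub
      intro z hz
      by_cases hzS : z ∈ S
      · exact Finset.mem_union_left _ hzS
      · refine Finset.mem_union_right _ ?_
        by_cases hzc : z = c
        · exact hzc ▸ hcC
        · have hadj : G.Adj c z := by
            apply hK' (by exact_mod_cast hsub hcR) (by exact_mod_cast hz)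
            exact fun h => hzc (h.symm)
          exact hstay c z hcC (RIn.of_adj hadj
            (Finset.mem_sdiff.2 ⟨Finset.mem_univ _, hCS c hcC⟩)
            (Finset.mem_sdiff.2 ⟨Finset.mem_univ _, hzS⟩))
    -- each step of the chain is a unit-graph edge
    have hstepedge : ∀ Rp Rq : Finset V, Step G s' S Rp Rq →
        ∀ (hp : MaxClique G Rp) (hq : MaxClique G Rq),
          (unitGraph G w).Adj ⟨Rp, hp⟩ ⟨Rq, hq⟩ := by
      intro Rp Rq hst hp hq
      obtain ⟨hadj, hPm, hQm, hSRp, hSRq⟩ := hst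
      have hST : S ⊆ Rp ∩ Rq := Finset.subset_inter hSRp hSRq
      have hmemC : ∀ z ∈ s', z ∉ S → z ∈ C := by
        intro z hz hzS
        rcases Finset.mem_union.1 hz with h' | h'
        · exact absurd h' hzS
        · exact h'
      -- the clique graph adjacency
      have hadjU : AdjIn G Finset.univ Rp Rq := by
        refine ⟨hadj.1, ?_⟩
        intro u hu v hv
        have hmins' := hadj.2 u hu v hv
        have hum := Finset.mem_sdiff.1 hu
        have hvm := Finset.mem_sdiff.1 hv
        have huS : u ∉ S := fun h => hum.2 (hSRq h)
        have hvS : v ∉ S := fun h => hvm.2 (hSRp h)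
        have huC : u ∈ C := hmemC u (hPm.1.1 hum.1) huS
        have hvC : v ∈ C := hmemC v (hQm.1.1 hvm.1) hvS
        refine ⟨⟨hmins'.1.1, hmins'.1.2.1, ?_⟩, ?_⟩
        · rintro ⟨p, hp'⟩
          apply hmins'.1.2.2
          refine ⟨p, fun z hz => ?_⟩
          have hzm := Finset.mem_sdiff.1 (hp' z hz)
          have hzS : z ∉ S := fun h => hzm.2 (hST h)
          have hzC : z ∈ C := by
            refine hstay u z huC ⟨p.takeUntil z hz, ?_⟩
            intro zz hzz
            have hzzm := Finset.mem_sdiff.1 (hp' zz (Walk.support_takeUntil_subset _ _ hzz))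
            exact Finset.mem_sdiff.2 ⟨Finset.mem_univ _, fun h => hzzm.2 (hST h)⟩
          exact Finset.mem_sdiff.2 ⟨Finset.mem_union_right _ hzC, hzm.2⟩
        · intro T' hT' hsepU
          refine hmins'.2 T' hT' ⟨hsepU.1, hsepU.2.1, ?_⟩
          intro hr
          exact hsepU.2.2 (hr.mono (Finset.sdiff_subset_sdiff (Finset.subset_univ _) le_rfl))
      -- the weight is bigger than w
      have hcardne : (Rp ∩ Rq).card ≠ w := by
        intro hcard
        have hTS : Rp ∩ Rq = S :=
          (Finset.eq_of_subset_of_card_le hST (by omega)).symm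
        have hRpQ : ∃ u, u ∈ Rp \ Rq := by
          by_contra h
          push_neg at h
          have hsub : Rp ⊆ Rq := by
            intro z hz
            by_contra hzn
            exact h z (Finset.mem_sdiff.2 ⟨hz, hzn⟩)
          exact hadj.1 (hPm.2 Rq hQm.1 hsub)
        have hRqP : ∃ v, v ∈ Rq \ Rp := by
          by_contra h
          push_neg at h
          have hsub : Rq ⊆ Rp := by
            intro z hz
            by_contra hzn
            exact h z (Finset.mem_sdiff.2 ⟨hz, hzn⟩)
          exact hadj.1 (hQm.2 Rp hPm.1 hsub).symm
        obtain ⟨u, hu⟩ := hRpQ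
        obtain ⟨v, hv⟩ := hRqP
        have hmins' := hadj.2 u hu v hv
        rw [hTS] at hmins'
        apply hmins'.1.2.2
        have hum := Finset.mem_sdiff.1 hu
        have hvm := Finset.mem_sdiff.1 hv
        have huS : u ∉ S := fun h => hum.2 (hSRq h)
        have hvS : v ∉ S := fun h => hvm.2 (hSRp h)
        have huC : u ∈ C := hmemC u (hPm.1.1 hum.1) huS
        have hvC : v ∈ C := hmemC v (hQm.1.1 hvm.1) hvS
        obtain ⟨p, hp'⟩ := ((hCmem u).1 huC).symm.trans ((hCmem v).1 hvC)
        refine ⟨p, fun z hz => ?_⟩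
        have hzm := Finset.mem_sdiff.1 (hp' z hz)
        have hzC : z ∈ C := by
          refine hstay u z huC ⟨p.takeUntil z hz, ?_⟩
          intro zz hzz
          exact hp' zz (Walk.support_takeUntil_subset _ _ hzz)
        exact Finset.mem_sdiff.2 ⟨Finset.mem_union_right _ hzC, hzm.2⟩
      exact ⟨cg_adj_iff.2 hadjU, hcardne⟩
    -- induct along the chain
    have hmain : ∀ Rq : Finset V, Relation.ReflTransGen (Step G s' S) P.1 Rq →
        ∀ hRq : MaxClique G Rq, umk G w P = umk G w ⟨Rq, hRq⟩ := by
      intro Rq hrtg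
      induction hrtg with
      | refl => intro hRq; rfl
      | tail hc hstep ihc =>
          rename_i Rm Rq'
          intro hRq
          have hRmmax : MaxClique G Rm := hmaxlift Rm hstep.2.1 hstep.2.2.2.1
          refine (ihc hRmmax).trans ?_
          exact ConnectedComponent.sound ((hstepedge Rm Rq' hstep hRmmax hRq).reachable)
    have := hmain Q.1 hchain Q.2
    simpa using this
  -- now the main conclusion
  rintro A B hAB ⟨P, hPA, hSP⟩ ⟨Q, hQB, hSQ⟩
  have hfar : ∀ x, x ∈ P.1 → x ∉ S → ∀ y, y ∈ Q.1 → y ∉ S →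
      ¬ RIn G (Finset.univ \ S) x y := by
    intro x hx hxS y hy hyS hr
    exact hAB (hPA ▸ hQB ▸ hA6 P Q hSP hSQ x hx hxS y hy hyS hr)
  obtain ⟨hadjPQ, hinterPQ⟩ := hA5 P Q hSP hSQ hfar
  constructor
  · exact ⟨hAB, P, Q, hadjPQ, hPA, hQB⟩
  · intro M M' hMM' hMA hM'B
    have hsub : M.1 ∩ M'.1 ⊆ S := by
      intro z hz
      by_contra hzS
      obtain ⟨p0, hp0, hp0S⟩ := hres P
      obtain ⟨q0, hq0, hq0S⟩ := hres Q
      have h1 := hA4' M P (hMA.trans hPA.symm) z (Finset.mem_inter.1 hz).1 hzS p0 hp0 hp0S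
      have h2 := hA4' M' Q (hM'B.trans hQB.symm) z (Finset.mem_inter.1 hz).2 hzS q0 hq0 hq0S
      exact hfar p0 hp0 hp0S q0 hq0 hq0S (h1.symm.trans h2)
    have hge : S.card ≤ (M.1 ∩ M'.1).card := by
      rw [hScard]
      exact hw.2 M M' hMM'
    exact Finset.eq_of_subset_of_card_le hsub hge

end Assembly

end ChordalAux


/-- if `U1U2` and `U3U4` are two distinct edges of the layer structure with
the same label `S`, then the units in `{U1, U2, U3, U4}` are pairwise adjacent, and all
edges among them have label `S`. -/
theorem stmt8 (G : SimpleGraph V) (hG : G.Connected) (hch : IsChordal G)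
    (w : ℕ) (hw : IsMinEdgeWeight G w) (U1 U2 U3 U4 : LUnit G w)
    (h12 : (layerGraph G w).Adj U1 U2) (h34 : (layerGraph G w).Adj U3 U4)
    (hdist : s(U1, U2) ≠ s(U3, U4)) (S : Finset V)
    (hS12 : ∃ K K' : CV G, (cliqueGraph G).Adj K K' ∧ umk G w K = U1 ∧ umk G w K' = U2 ∧
      K.1 ∩ K'.1 = S)
    (hS34 : ∃ K K' : CV G, (cliqueGraph G).Adj K K' ∧ umk G w K = U3 ∧ umk G w K' = U4 ∧
      K.1 ∩ K'.1 = S) :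
    ∀ A ∈ ({U1, U2, U3, U4} : Set (LUnit G w)), ∀ B ∈ ({U1, U2, U3, U4} : Set (LUnit G w)),
      A ≠ B → (layerGraph G w).Adj A B ∧ CrossLabel G w A B S := by
  classical
  obtain ⟨K1, K1', hadj1, hU1, hU2, hlab1⟩ := hS12
  obtain ⟨K3, K3', hadj3, hU3, hU4, hlab3⟩ := hS34
  have hScard : S.card = w := by
    by_contra hne
    have hadjU : (unitGraph G w).Adj K1 K1' := ⟨hadj1, by rw [hlab1]; exact hne⟩
    have h12' : umk G w K1 = umk G w K1' :=
      SimpleGraph.ConnectedComponent.sound hadjU.reachable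
    rw [hU1, hU2] at h12'
    exact h12.ne h12'
  have hSsub : ∀ X ∈ ({U1, U2, U3, U4} : Set (LUnit G w)),
      ∃ P : CV G, umk G w P = X ∧ S ⊆ P.1 := by
    intro X hX
    simp only [Set.mem_insert_iff, Set.mem_singleton_iff] at hX
    rcases hX with rfl | rfl | rfl | rfl
    · exact ⟨K1, hU1, hlab1 ▸ Finset.inter_subset_left⟩
    · exact ⟨K1', hU2, hlab1 ▸ Finset.inter_subset_right⟩
    · exact ⟨K3, hU3, hlab3 ▸ Finset.inter_subset_left⟩
    · exact ⟨K3', hU4, hlab3 ▸ Finset.inter_subset_right⟩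
  intro A hA B hB hAB
  exact ChordalAux.stmt8_core hch hw hScard K1 K1' hadj1 hlab1 A B hAB (hSsub A hA) (hSsub B hB)
end

section
/- Let G be a connected chordal graph with a layer structure on its clique graph. For any two adjacent units U and U' of the layer structure, the label of the edge between them equals V(U) ∩ V(U'), where V(U) denotes the union of all maximal cliques of G contained in U. -/
open SimpleGraph

attribute [local instance] Classical.propDecidable
set_option linter.unusedSectionVars false

variable {V : Type*} [Fintype V] [DecidableEq V]

/-- Within a clique, any two vertices avoiding `S` are joined by a walk avoiding `S`. -/
lemma clique_walk_avoid {G : SimpleGraph V} {M : Finset V} (hM : G.IsClique (M : Set V))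
    {S : Finset V} {y z : V} (hy : y ∈ M) (hz : z ∈ M) (hyS : y ∉ S) (hzS : z ∉ S) :
    ∃ q : G.Walk y z, ∀ a ∈ q.support, a ∉ S := by
  by_cases hyz : y = z
  · subst hyz
    exact ⟨Walk.nil, by simp [hyS]⟩
  · have hadj : G.Adj y z := hM (Finset.mem_coe.mpr hy) (Finset.mem_coe.mpr hz) hyz
    refine ⟨Walk.cons hadj Walk.nil, ?_⟩
    intro a ha
    simp only [Walk.support_cons, Walk.support_nil, List.mem_cons, List.mem_singleton,
      List.not_mem_nil, or_false] at ha
    rcases ha with rfl | rfl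
    · exact hyS
    · exact hzS

/-- Along a walk in the unit graph, vertices of the endpoints avoiding `S` (with
`S.card = w`) are joined in `G` by a walk avoiding `S`. -/
lemma unit_walk_avoid {G : SimpleGraph V} {w : ℕ}
    (hw2 : ∀ N N' : CV G, (cliqueGraph G).Adj N N' → w ≤ (N.1 ∩ N'.1).card)
    {S : Finset V} (hSw : S.card = w) {M K : CV G} (p : (unitGraph G w).Walk M K) :
    ∀ y ∈ M.1, y ∉ S → ∀ z ∈ K.1, z ∉ S →
      ∃ q : G.Walk y z, ∀ a ∈ q.support, a ∉ S := by
  induction p with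
  | @nil N =>
    intro y hy hyS z hz hzS
    exact clique_walk_avoid N.2.1 hy hz hyS hzS
  | @cons M N K' h p ih =>
    intro y hy hyS z hz hzS
    obtain ⟨hMN, hcard⟩ := h
    -- the edge `MN` has weight `> w = S.card`, so `M ∩ N ⊄ S`
    have hgt : S.card < (M.1 ∩ N.1).card := by
      have := hw2 M N hMN
      omega
    have hnot : ¬ (M.1 ∩ N.1 ⊆ S) := fun hsub => absurd (Finset.card_le_card hsub) (by omega)
    obtain ⟨a, haMN, haS⟩ := Finset.not_subset.mp hnot
    have haM : a ∈ M.1 := (Finset.mem_inter.mp haMN).1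
    have haN : a ∈ N.1 := (Finset.mem_inter.mp haMN).2
    obtain ⟨q1, hq1⟩ := clique_walk_avoid M.2.1 hy haM hyS haS
    obtain ⟨q2, hq2⟩ := ih a haN haS z hz hzS
    refine ⟨q1.append q2, ?_⟩
    intro b hb
    rcases (Walk.mem_support_append_iff _ _).mp hb with hb | hb
    · exact hq1 b hb
    · exact hq2 b hb

/-- the label of any edge between two adjacent units `U` and `U'` equals
`𝒱(U) ∩ 𝒱(U')`. -/
theorem stmt11 (G : SimpleGraph V) (hG : G.Connected) (hch : IsChordal G)
    (w : ℕ) (hw : IsMinEdgeWeight G w) (U U' : LUnit G w)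
    (hadj : (layerGraph G w).Adj U U')
    (K K' : CV G) (hKK' : (cliqueGraph G).Adj K K')
    (hK : umk G w K = U) (hK' : umk G w K' = U') :
    (↑(K.1 ∩ K'.1) : Set V) = unitVerts G w U ∩ unitVerts G w U' := by
  have hUne : U ≠ U' := hadj.1
  -- the crossing edge has weight exactly `w`
  have hSw : (K.1 ∩ K'.1).card = w := by
    by_contra hne
    have : (unitGraph G w).Adj K K' := ⟨hKK', hne⟩
    have : umk G w K = umk G w K' := ConnectedComponent.sound this.reachable
    exact hUne (hK ▸ hK' ▸ this)
  have hKne : K ≠ K' := hKK'.1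
  -- `K \ K'` and `K' \ K` are nonempty
  have hKdiff : ∃ u, u ∈ K.1 \ K'.1 := by
    by_contra h
    push_neg at h
    have hsub : K.1 ⊆ K'.1 := fun a ha => by
      by_contra ha'
      exact h a (Finset.mem_sdiff.mpr ⟨ha, ha'⟩)
    exact hKne (Subtype.ext (K.2.2 K'.1 K'.2.1 hsub))
  have hKdiff' : ∃ v, v ∈ K'.1 \ K.1 := by
    by_contra h
    push_neg at h
    have hsub : K'.1 ⊆ K.1 := fun a ha => by
      by_contra ha'
      exact h a (Finset.mem_sdiff.mpr ⟨ha, ha'⟩)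
    exact hKne.symm (Subtype.ext (K'.2.2 K.1 K.2.1 hsub))
  obtain ⟨u, hu⟩ := hKdiff
  obtain ⟨v, hv⟩ := hKdiff'
  have hsep : Separates G (K.1 ∩ K'.1) u v := (hKK'.2 u hu v hv).1
  obtain ⟨huS, hvS, hwalks⟩ := hsep
  ext x
  simp only [Finset.coe_inter, Set.mem_inter_iff, Finset.mem_coe, Finset.mem_inter]
  constructor
  · rintro ⟨hx1, hx2⟩
    exact ⟨⟨K, hK, hx1⟩, ⟨K', hK', hx2⟩⟩
  · rintro ⟨⟨M, hM, hxM⟩, ⟨M', hM', hxM'⟩⟩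
    by_contra hxS
    rw [← Finset.mem_inter] at hxS
    -- `M` and `K` are in the same unit, likewise `M'` and `K'`
    have hr1 : (unitGraph G w).Reachable M K := ConnectedComponent.exact (hM.trans hK.symm)
    have hr2 : (unitGraph G w).Reachable M' K' := ConnectedComponent.exact (hM'.trans hK'.symm)
    obtain ⟨p1⟩ := hr1
    obtain ⟨p2⟩ := hr2
    have huK : u ∈ K.1 := (Finset.mem_sdiff.mp hu).1
    have hvK' : v ∈ K'.1 := (Finset.mem_sdiff.mp hv).1
    obtain ⟨q1, hq1⟩ := unit_walk_avoid hw.2 hSw p1 x hxM hxS u huK huS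
    obtain ⟨q2, hq2⟩ := unit_walk_avoid hw.2 hSw p2 x hxM' hxS v hvK' hvS
    -- the walk `u → x → v` avoids `S`, contradicting that `S` separates `u` from `v`
    obtain ⟨b, hb, hbS⟩ := hwalks (q1.reverse.append q2)
    rcases (Walk.mem_support_append_iff _ _).mp hb with hb | hb
    · rw [Walk.support_reverse, List.mem_reverse] at hb
      exact hq1 b hb hbS
    · exact hq2 b hb hbS
end
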